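/- arXiv:0907.4486 — 7 statements merged into one kernel-verified Lean document; each statement's English description precedes it below -/
import Mathlib

section
/- The unilateral shift S on ℓ²(ℕ) is not a complex symmetric operator. -/
noncomputable section

open ContinuousLinearMap

def IsConjugation {H : Type*} [NormedAddCommGroup H] [InnerProductSpace ℂ H]
    (C : H → H) : Prop :=
  (∀ x y, C (x + y) = C x + C y) ∧
  (∀ (a : ℂ) (x : H), C (a • x) = (starRingEnd ℂ) a • C x) ∧
  (∀ x, C (C x) = x) ∧
  (∀ x y : H, (inner ℂ (C x) (C y) : ℂ) = inner ℂ y x)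

def IsComplexSymmetric {H : Type*} [NormedAddCommGroup H] [InnerProductSpace ℂ H]
    [CompleteSpace H] (T : H →L[ℂ] H) : Prop :=
  ∃ C : H → H, IsConjugation C ∧ ∀ x, T x = C (adjoint T (C x))

/-- `ℓ²(ℕ)`. -/
abbrev ellTwo : Type := lp (fun _ : ℕ => ℂ) 2

/-- The standard basis vector `eₙ` of `ℓ²(ℕ)`. -/
def e (n : ℕ) : ellTwo := lp.single 2 n (1 : ℂ)

lemma hasSum_smul_e (f : ellTwo) : HasSum (fun n => (f n : ℂ) • e n) f := by
  have h := lp.hasSum_single (E := fun _ : ℕ => ℂ) (p := 2) (by norm_num) f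
  convert h using 2 with n
  rw [e, ← lp.single_smul]
  simp

/-- Extensionality: continuous linear maps agreeing on the `e n` agree everywhere. -/
lemma clm_ext {F : Type*} [NormedAddCommGroup F] [NormedSpace ℂ F]
    (A B : ellTwo →L[ℂ] F) (h : ∀ n, A (e n) = B (e n)) (x : ellTwo) : A x = B x := by
  have hA : HasSum (fun n => (x n : ℂ) • A (e n)) (A x) := by
    simpa using (hasSum_smul_e x).mapL A
  have hB : HasSum (fun n => (x n : ℂ) • B (e n)) (B x) := by
    simpa using (hasSum_smul_e x).mapL B
  exact hA.unique (by simpa only [h] using hB)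

lemma inner_e_e (m n : ℕ) : (inner ℂ (e m) (e n) : ℂ) = if m = n then 1 else 0 := by
  rw [e, e, lp.inner_single_left]
  rcases eq_or_ne m n with h | h
  · subst h; simp [lp.single_apply_self]
  · rw [lp.single_apply_ne 2 n _ h]; simp [h]

theorem unilateral_shift_not_complexSymmetric
    (S : ellTwo →L[ℂ] ellTwo) (hS : ∀ n, S (e n) = e (n + 1)) :
    ¬ IsComplexSymmetric S := by
  -- inner (e 0) (S x) = 0 for all x
  have h0 : ∀ x : ellTwo, (inner ℂ (e 0) (S x) : ℂ) = 0 := by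
    intro x
    have := clm_ext ((innerSL ℂ (e 0)).comp S) 0 (fun n => by
      simp [hS, inner_e_e]) x
    simpa using this
  -- adjoint S (e 0) = 0
  have hadj0 : adjoint S (e 0) = 0 := by
    have : (inner ℂ (adjoint S (e 0)) (adjoint S (e 0)) : ℂ) = 0 := by
      rw [adjoint_inner_left]; exact h0 _
    simpa using inner_self_eq_zero.mp this
  -- adjoint S (e (n+1)) = e n
  have hadj : ∀ n, adjoint S (e (n + 1)) = e n := by
    intro n
    refine ext_inner_right ℂ (fun v => ?_)
    rw [adjoint_inner_left]
    have := clm_ext ((innerSL ℂ (e (n + 1))).comp S) (innerSL ℂ (e n)) (fun m => by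
      simp [hS, inner_e_e]) v
    simpa using this
  -- S is injective: adjoint S ∘ S = id
  have hinj : ∀ x : ellTwo, adjoint S (S x) = x := by
    intro x
    have := clm_ext ((adjoint S).comp S) (ContinuousLinearMap.id ℂ ellTwo)
      (fun n => by simp [hS, hadj]) x
    simpa using this
  rintro ⟨C, ⟨hadd, hsmul, hinv, hinner⟩, hT⟩
  have hC0 : C 0 = 0 := by
    have h := hadd 0 0
    simp only [add_zero] at h
    exact left_eq_add.mp h
  have hSv : S (C (e 0)) = 0 := by
    rw [hT, hinv, hadj0, hC0]
  have hv : C (e 0) = 0 := by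
    have := hinj (C (e 0))
    rw [hSv, map_zero] at this
    exact this.symm
  have he0 : e 0 = 0 := by
    have := hinv (e 0)
    rw [hv, hC0] at this
    exact this.symm
  have : ((e 0 : ellTwo) 0 : ℂ) = 1 := lp.single_apply_self 2 0 1
  rw [he0] at this
  simp at this
end
end

section
/- Let H, K be separable complex Hilbert spaces and T ∈ B(H). Then T is a complex symmetric operator if and only if T ⊕ 0 ∈ B(H ⊕ K) is a complex symmetric operator. -/
noncomputable section

open ContinuousLinearMap

theorem exists_isConjugation (E : Type*) [NormedAddCommGroup E] [InnerProductSpace ℂ E]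
    [CompleteSpace E] : ∃ C : E → E, IsConjugation C := by
  obtain ⟨w, b, -⟩ := exists_hilbertBasis ℂ E
  refine ⟨fun x => b.repr.symm (star (b.repr x)), ?_, ?_, ?_, ?_⟩
  · intro x y; simp [star_add]
  · intro a x; simp [map_smul, star_smul]
  · intro x; simp
  · intro x y
    have key : ∀ f g : lp (fun _ : w => ℂ) 2, (inner ℂ (star f) (star g) : ℂ) = inner ℂ g f := by
      intro f g
      rw [lp.inner_eq_tsum, lp.inner_eq_tsum]
      congr 1; funext i
      simp [RCLike.inner_apply, mul_comm]
    rw [b.repr.symm.inner_map_map, key, b.repr.inner_map_map]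

theorem complexSymmetric_iff_directSum_zero_complexSymmetric
    {H K : Type*} [NormedAddCommGroup H] [InnerProductSpace ℂ H] [CompleteSpace H]
    [TopologicalSpace.SeparableSpace H]
    [NormedAddCommGroup K] [InnerProductSpace ℂ K] [CompleteSpace K]
    [TopologicalSpace.SeparableSpace K]
    (T : H →L[ℂ] H)
    (S : WithLp 2 (H × K) →L[ℂ] WithLp 2 (H × K))
    (hS : ∀ x, S x = (WithLp.equiv 2 (H × K)).symm
      (T ((WithLp.equiv 2 (H × K)) x).1, 0)) :
    IsComplexSymmetric T ↔ IsComplexSymmetric S := by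
  classical
  set e := WithLp.equiv 2 (H × K) with he
  set ι : H → WithLp 2 (H × K) := fun h => e.symm (h, 0) with hιdef
  have wext : ∀ x y : WithLp 2 (H × K), x.fst = y.fst → x.snd = y.snd → x = y := by
    intro x y h1 h2
    exact congrArg (WithLp.toLp 2) (Prod.ext h1 h2)
  have hιfst : ∀ h, (ι h).fst = h := fun h => by simp [hιdef, he]
  have hιsnd : ∀ h, (ι h).snd = 0 := fun h => by simp [hιdef, he]
  have hSfst : ∀ x, (S x).fst = T x.fst := by
    intro x; rw [hS]; simp [he]
  have hSsnd : ∀ x, (S x).snd = 0 := by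
    intro x; rw [hS]; simp [he]
  have hSx : ∀ x, S x = ι (T x.fst) := by
    intro x; exact wext _ _ (by rw [hSfst, hιfst]) (by rw [hSsnd, hιsnd])
  have hadjS : ∀ y, adjoint S y = ι (adjoint T y.fst) := by
    intro y
    apply ext_inner_left ℂ
    intro v
    rw [adjoint_inner_right, hSx]
    rw [WithLp.prod_inner_apply, WithLp.prod_inner_apply]; simp only [WithLp.ofLp_fst, WithLp.ofLp_snd]
    rw [hιfst, hιsnd, hιfst, hιsnd]
    simp [adjoint_inner_right]
  constructor
  · -- forward direction
    rintro ⟨C, ⟨hCa, hCs, hCi, hCip⟩, hCT⟩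
    obtain ⟨C2, h2a, h2s, h2i, h2ip⟩ := exists_isConjugation K
    have hC20 : C2 0 = 0 := by simpa using h2s 0 0
    refine ⟨fun x => e.symm (C x.fst, C2 x.snd), ⟨?_, ?_, ?_, ?_⟩, ?_⟩
    · intro x y
      apply wext <;>
        simp [he, WithLp.add_fst, WithLp.add_snd, hCa, h2a]
    · intro a x
      apply wext <;>
        simp [he, WithLp.smul_fst, WithLp.smul_snd, hCs, h2s]
    · intro x
      show e.symm (C (e.symm (C x.fst, C2 x.snd)).fst, C2 (e.symm (C x.fst, C2 x.snd)).snd) = x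
      apply wext
      · simp [he, hCi]
      · simp [he, h2i]
    · intro x y
      rw [WithLp.prod_inner_apply, WithLp.prod_inner_apply]; simp only [WithLp.ofLp_fst, WithLp.ofLp_snd]
      simp only [he, WithLp.equiv_symm_apply, WithLp.toLp_fst, WithLp.toLp_snd]
      rw [hCip, h2ip]
    · intro x
      rw [hSx]
      show ι (T x.fst) = e.symm (C (adjoint S (e.symm (C x.fst, C2 x.snd))).fst,
        C2 (adjoint S (e.symm (C x.fst, C2 x.snd))).snd)
      rw [hadjS]
      apply wext
      · rw [hιfst]
        simp only [he, WithLp.equiv_symm_apply, WithLp.toLp_fst, WithLp.toLp_snd]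
        rw [hιfst, ← hCT]
      · rw [hιsnd]
        simp only [he, WithLp.equiv_symm_apply, WithLp.toLp_fst, WithLp.toLp_snd]
        rw [hιsnd, hC20]
  · -- backward direction
    rintro ⟨C, ⟨hCa, hCs, hCi, hCip⟩, hrel⟩
    have hC0 : C 0 = 0 := by simpa using hCs 0 0
    have hSC : ∀ x, S (C x) = C (adjoint S x) := by
      intro x; rw [hrel (C x), hCi]
    have hCS : ∀ x, C (S x) = adjoint S (C x) := by
      intro x; rw [hrel x, hCi]
    set A : H → H := fun h => (C (ι h)).fst with hAdef
    have hAapp : ∀ h, A h = (C (ι h)).fst := fun _ => rfl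
    -- additivity etc.
    have hιadd : ∀ h h', ι (h + h') = ι h + ι h' := by
      intro h h'
      apply wext
      · rw [WithLp.add_fst, hιfst, hιfst, hιfst]
      · rw [WithLp.add_snd, hιsnd, hιsnd, hιsnd, add_zero]
    have hιsmul : ∀ (a : ℂ) h, ι (a • h) = a • ι h := by
      intro a h
      apply wext
      · rw [WithLp.smul_fst, hιfst, hιfst]
      · rw [WithLp.smul_snd, hιsnd, hιsnd, smul_zero]
    have hι0 : ι 0 = 0 := by
      apply wext
      · rw [hιfst, WithLp.zero_fst]
      · rw [hιsnd, WithLp.zero_snd]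
    have hAadd : ∀ h h', A (h + h') = A h + A h' := by
      intro h h'
      show (C (ι (h + h'))).fst = (C (ι h)).fst + (C (ι h')).fst
      rw [hιadd, hCa, WithLp.add_fst]
    have hAsmul : ∀ (a : ℂ) h, A (a • h) = (starRingEnd ℂ) a • A h := by
      intro a h
      show (C (ι (a • h))).fst = (starRingEnd ℂ) a • (C (ι h)).fst
      rw [hιsmul, hCs, WithLp.smul_fst]
    have hA0 : A 0 = 0 := by
      show (C (ι 0)).fst = 0
      rw [hι0, hC0, WithLp.zero_fst]
    have hAsub : ∀ h h', A (h - h') = A h - A h' := by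
      intro h h'
      have := hAadd (h - h') h'
      rw [sub_add_cancel] at this
      rw [this]; abel
    -- intertwining relations
    have hTA : ∀ h, T (A h) = A (adjoint T h) := by
      intro h
      have h1 : (S (C (ι h))).fst = (C (adjoint S (ι h))).fst :=
        congrArg (fun z : WithLp 2 (H × K) => z.fst) (hSC (ι h))
      rw [hSfst, hadjS, hιfst] at h1
      rw [hAapp, hAapp]
      exact h1
    have hAT : ∀ h, A (T h) = adjoint T (A h) := by
      intro h
      have h1 : (C (S (ι h))).fst = (adjoint S (C (ι h))).fst :=
        congrArg (fun z : WithLp 2 (H × K) => z.fst) (hCS (ι h))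
      rw [hSx, hιfst, hadjS] at h1
      rw [hAapp, hAapp]
      rw [h1, hιfst]
    -- T kills the K-part of C
    have hTB : ∀ x : WithLp 2 (H × K), x.fst = 0 → T ((C x).fst) = 0 := by
      intro x hx
      have hax : adjoint S x = 0 := by
        rw [hadjS, hx, map_zero, hι0]
      have h1 : (S (C x)).fst = (C (adjoint S x)).fst :=
        congrArg (fun z : WithLp 2 (H × K) => z.fst) (hSC x)
      rw [hSfst, hax, hC0, WithLp.zero_fst] at h1
      exact h1
    -- T ∘ Q = T
    have hTQ : ∀ h, T (A (A h)) = T h := by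
      intro h
      set z := C (ι h) with hzdef
      set w := z - ι z.fst with hwdef
      have hwfst : w.fst = 0 := by
        rw [hwdef, WithLp.sub_fst, hιfst, sub_self]
      have hzdec : z = ι z.fst + w := by rw [hwdef]; abel
      have h1 : (C z).fst = A z.fst + (C w).fst := by
        conv_lhs => rw [hzdec]
        rw [hCa, WithLp.add_fst]
      have h2 : (C z).fst = h := by
        rw [hzdef, hCi, hιfst]
      have h3 : T h = T (A z.fst) + T ((C w).fst) := by
        rw [← h2, h1, map_add]
      rw [hTB w hwfst, add_zero] at h3
      have h4 : z.fst = A h := (hAapp h).symm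
      rw [h4] at h3
      exact h3.symm
    -- Q ∘ T = T
    have hQT : ∀ h, A (A (T h)) = T h := by
      intro h
      rw [hAT h, ← hTA (A h), hTQ]
    -- symmetry of A
    have hCsym : ∀ u v, (inner ℂ (C u) v : ℂ) = inner ℂ (C v) u := by
      intro u v
      have := hCip u (C v)
      rwa [hCi] at this
    have hAsym : ∀ x y, (inner ℂ (A x) y : ℂ) = inner ℂ (A y) x := by
      intro x y
      have := hCsym (ι x) (ι y)
      rw [WithLp.prod_inner_apply, WithLp.prod_inner_apply] at this; simp only [WithLp.ofLp_fst, WithLp.ofLp_snd] at this; rw [hιfst, hιfst, hιsnd, hιsnd] at this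
      simpa using this
    have hQsym : ∀ x y, (inner ℂ (A (A x)) y : ℂ) = inner ℂ x (A (A y)) := by
      intro x y
      rw [hAsym (A x) y, ← inner_conj_symm x (A (A y)), hAsym (A y) x, inner_conj_symm]
    -- T† ∘ Q = T†
    have hT'Q : ∀ h, adjoint T (A (A h)) = adjoint T h := by
      intro h
      apply ext_inner_left ℂ
      intro v
      rw [adjoint_inner_right, adjoint_inner_right, ← hQsym, hQT]
    -- Q ∘ T† = T†
    have hQT' : ∀ h, A (A (adjoint T h)) = adjoint T h := by
      intro h
      rw [← hTA h, hAT (A h), hT'Q]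
    -- the subspace M
    have hAnorm : ∀ h, ‖A h‖ ≤ ‖h‖ := by
      intro h
      have hfst : ‖(C (ι h)).fst‖ ≤ ‖C (ι h)‖ := by
        have h1 := WithLp.prod_norm_sq_eq_of_L2 (C (ι h))
        nlinarith [norm_nonneg (C (ι h)), norm_nonneg ((C (ι h)).fst),
          norm_nonneg ((C (ι h)).snd), sq_nonneg ‖(C (ι h)).snd‖]
      have hnorm : ‖C (ι h)‖ = ‖ι h‖ := by
        rw [@norm_eq_sqrt_re_inner ℂ, @norm_eq_sqrt_re_inner ℂ, hCip]
      have hιnorm : ‖ι h‖ = ‖h‖ := by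
        rw [hιdef]
        exact WithLp.norm_toLp_fst 2 H K h
      calc ‖A h‖ = ‖(C (ι h)).fst‖ := rfl
        _ ≤ ‖C (ι h)‖ := hfst
        _ = ‖h‖ := by rw [hnorm, hιnorm]
    have hAcont : Continuous A := by
      have : LipschitzWith 1 A := by
        apply LipschitzWith.of_dist_le_mul
        intro x y
        rw [dist_eq_norm, dist_eq_norm, ← hAsub]
        simpa using hAnorm (x - y)
      exact this.continuous
    set M : Submodule ℂ H :=
      { carrier := {h | A (A h) = h}
        add_mem' := by
          intro a b ha hb
          simp only [Set.mem_setOf_eq] at *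
          rw [hAadd, hAadd, ha, hb]
        zero_mem' := by
          simp only [Set.mem_setOf_eq, hA0]
        smul_mem' := by
          intro c x hx
          simp only [Set.mem_setOf_eq] at *
          rw [hAsmul, hAsmul, hx, Complex.conj_conj] } with hMdef
    have hMmem : ∀ h, h ∈ M ↔ A (A h) = h := fun h => Iff.rfl
    have hMclosed : IsClosed (M : Set H) := by
      have : (M : Set H) = {h | A (A h) = h} := rfl
      rw [this]
      exact isClosed_eq (hAcont.comp hAcont) continuous_id
    haveI : CompleteSpace M := hMclosed.completeSpace_coe
    haveI : CompleteSpace ↥Mᗮ := (Submodule.isClosed_orthogonal M).completeSpace_coe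
    obtain ⟨C2, h2a, h2s, h2i, h2ip⟩ := exists_isConjugation ↥Mᗮ
    have hC20 : C2 0 = 0 := by simpa using h2s 0 0
    set P := M.orthogonalProjectionOnto with hPdef
    set P' := Mᗮ.orthogonalProjectionOnto with hP'def
    have hTmem : ∀ h, T h ∈ M := fun h => hQT h
    have hT'mem : ∀ h, adjoint T h ∈ M := fun h => hQT' h
    have hAmem : ∀ h, h ∈ M → A h ∈ M := by
      intro h hh
      exact congrArg A hh
    have hTperp : ∀ v, v ∈ Mᗮ → T v = 0 := by
      intro v hv
      apply ext_inner_left ℂ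
      intro u
      rw [← adjoint_inner_left, inner_zero_right]
      exact (Submodule.mem_orthogonal M v).mp hv _ (hT'mem u)
    have hT'perp : ∀ v, v ∈ Mᗮ → adjoint T v = 0 := by
      intro v hv
      apply ext_inner_left ℂ
      intro u
      rw [adjoint_inner_right, inner_zero_right]
      exact (Submodule.mem_orthogonal M v).mp hv _ (hTmem u)
    have hdecomp : ∀ x : H, (P x : H) + (P' x : H) = x := fun x => by
      have := Submodule.starProjection_add_starProjection_orthogonal (K := M) x; simpa only [Submodule.starProjection_apply] using this
    have hPM : ∀ (m : H) (hm : m ∈ M), P m = ⟨m, hm⟩ := by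
      intro m hm
      exact Submodule.orthogonalProjectionOnto_mem_subspace_eq_self (⟨m, hm⟩ : M)
    have hPperp : ∀ v, v ∈ Mᗮ → P v = 0 := by
      intro v hv
      exact Submodule.orthogonalProjectionOnto_apply_of_mem_orthogonal hv
    have hP'M : ∀ m, m ∈ M → P' m = 0 := by
      intro m hm
      exact Submodule.orthogonalProjectionOnto_apply_of_mem_orthogonal
        (M.le_orthogonal_orthogonal hm)
    have hP'perp : ∀ (v : H) (hv : v ∈ Mᗮ), P' v = ⟨v, hv⟩ := by
      intro v hv
      exact Submodule.orthogonalProjectionOnto_mem_subspace_eq_self (⟨v, hv⟩ : ↥Mᗮ)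
    have hPsplit : ∀ (m v : H) (hm : m ∈ M) (hv : v ∈ Mᗮ),
        P (m + v) = ⟨m, hm⟩ ∧ P' (m + v) = ⟨v, hv⟩ := by
      intro m v hm hv
      constructor
      · rw [map_add, hPM m hm, hPperp v hv, add_zero]
      · rw [map_add, hP'M m hm, hP'perp v hv, zero_add]
    refine ⟨fun x => A (P x : H) + ((C2 (P' x) : ↥Mᗮ) : H), ⟨?_, ?_, ?_, ?_⟩, ?_⟩
    · intro x y
      beta_reduce
      rw [map_add, map_add, Submodule.coe_add, hAadd, h2a, Submodule.coe_add]
      abel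
    · intro a x
      beta_reduce
      rw [map_smul, map_smul, Submodule.coe_smul, hAsmul, h2s, Submodule.coe_smul]
      rw [smul_add]
    · intro x
      beta_reduce
      have hm : A (P x : H) ∈ M := hAmem _ (P x).2
      have hv : ((C2 (P' x) : ↥Mᗮ) : H) ∈ Mᗮ := (C2 (P' x)).2
      obtain ⟨hp1, hp2⟩ := hPsplit _ _ hm hv
      rw [hp1, hp2]
      have e1 : A (A (P x : H)) = (P x : H) := (P x).2
      have e2 : C2 (⟨((C2 (P' x) : ↥Mᗮ) : H), hv⟩ : ↥Mᗮ) = P' x := by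
        have : (⟨((C2 (P' x) : ↥Mᗮ) : H), hv⟩ : ↥Mᗮ) = C2 (P' x) := rfl
        rw [this, h2i]
      rw [e2, e1, hdecomp]
    · intro x y
      beta_reduce
      have hmx : A (P x : H) ∈ M := hAmem _ (P x).2
      have hvx : ((C2 (P' x) : ↥Mᗮ) : H) ∈ Mᗮ := (C2 (P' x)).2
      have hmy : A (P y : H) ∈ M := hAmem _ (P y).2
      have hvy : ((C2 (P' y) : ↥Mᗮ) : H) ∈ Mᗮ := (C2 (P' y)).2
      rw [inner_add_left, inner_add_right, inner_add_right]
      rw [Submodule.inner_right_of_mem_orthogonal hmx hvy]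
      rw [Submodule.inner_left_of_mem_orthogonal hmy hvx]
      have h1 : (inner ℂ (A (P x : H)) (A (P y : H)) : ℂ) = inner ℂ (P y : H) (P x : H) := by
        rw [hAsym (P x : H) (A (P y : H))]
        have : A (A (P y : H)) = (P y : H) := (P y).2
        rw [this]
      have h2 : (inner ℂ ((C2 (P' x) : ↥Mᗮ) : H) ((C2 (P' y) : ↥Mᗮ) : H) : ℂ)
          = inner ℂ (P' y : H) (P' x : H) := by
        rw [← Submodule.coe_inner, h2ip, Submodule.coe_inner]
      rw [h1, h2]
      conv_rhs => rw [← hdecomp y, ← hdecomp x]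
      rw [inner_add_left, inner_add_right, inner_add_right]
      rw [Submodule.inner_right_of_mem_orthogonal (P y).2 (P' x).2]
      rw [Submodule.inner_left_of_mem_orthogonal (P x).2 (P' y).2]
    · intro x
      beta_reduce
      have hm : A (P x : H) ∈ M := hAmem _ (P x).2
      have hv : ((C2 (P' x) : ↥Mᗮ) : H) ∈ Mᗮ := (C2 (P' x)).2
      have step1 : adjoint T (A (P x : H) + ((C2 (P' x) : ↥Mᗮ) : H)) = A (T (P x : H)) := by
        rw [map_add, hT'perp _ hv, add_zero, ← hAT]
      rw [step1]
      have hy : A (T (P x : H)) ∈ M := hAmem _ (hTmem _)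
      rw [hPM _ hy, hP'M _ hy, hC20, Submodule.coe_zero, add_zero]
      have : A (A (T (P x : H))) = T (P x : H) := hQT _
      rw [this]
      conv_lhs => rw [← hdecomp x]
      rw [map_add, hTperp _ (P' x).2, add_zero]
end
end

section
/- Every operator on a two-dimensional complex Hilbert space is a complex symmetric operator. -/
noncomputable section

open ContinuousLinearMap
open scoped InnerProductSpace ComplexConjugate

private lemma key {H : Type*} [NormedAddCommGroup H] [InnerProductSpace ℂ H] [CompleteSpace H]
    (T : H →L[ℂ] H) (e0 e1 : H)
    (h00 : ⟪e0, e0⟫_ℂ = 1) (h11 : ⟪e1, e1⟫_ℂ = 1)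
    (h01 : ⟪e0, e1⟫_ℂ = 0) (h10 : ⟪e1, e0⟫_ℂ = 0)
    (hspan : ∀ x : H, x = ⟪e0, x⟫_ℂ • e0 + ⟪e1, x⟫_ℂ • e1)
    (α β γ : ℂ)
    (h1 : conj α * α + conj β * β = 1)
    (h2 : conj β * β + conj γ * γ = 1)
    (h3 : conj α * β + conj β * γ = 0)
    (h4 : ⟪e1, T e0⟫_ℂ * α - ⟪e0, T e1⟫_ℂ * γ = (⟪e0, T e0⟫_ℂ - ⟪e1, T e1⟫_ℂ) * β) :
    IsComplexSymmetric T := by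
  set a := ⟪e0, T e0⟫_ℂ with ha
  set bb := ⟪e0, T e1⟫_ℂ with hb
  set c := ⟪e1, T e0⟫_ℂ with hc
  set d := ⟪e1, T e1⟫_ℂ with hd
  have h3' : α * conj β + β * conj γ = 0 := by
    have := congrArg (starRingEnd ℂ) h3
    simpa [map_add, map_mul, mul_comm] using this
  refine ⟨fun x => (α * conj ⟪e0, x⟫_ℂ + β * conj ⟪e1, x⟫_ℂ) • e0
      + (β * conj ⟪e0, x⟫_ℂ + γ * conj ⟪e1, x⟫_ℂ) • e1, ⟨?_, ?_, ?_, ?_⟩, ?_⟩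
  · intro x y
    simp only [inner_add_right, map_add]
    module
  · intro t x
    simp only [inner_smul_right, map_mul]
    module
  · intro x
    simp only [inner_add_right, inner_smul_right, h00, h11, h01, h10, mul_one, mul_zero,
      add_zero, zero_add, map_add, map_mul, Complex.conj_conj]
    conv_rhs => rw [hspan x]
    have e1eq : α * (conj α * ⟪e0, x⟫_ℂ + conj β * ⟪e1, x⟫_ℂ)
        + β * (conj β * ⟪e0, x⟫_ℂ + conj γ * ⟪e1, x⟫_ℂ) = ⟪e0, x⟫_ℂ := by
      linear_combination ⟪e0, x⟫_ℂ * h1 + ⟪e1, x⟫_ℂ * h3'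
    have e2eq : β * (conj α * ⟪e0, x⟫_ℂ + conj β * ⟪e1, x⟫_ℂ)
        + γ * (conj β * ⟪e0, x⟫_ℂ + conj γ * ⟪e1, x⟫_ℂ) = ⟪e1, x⟫_ℂ := by
      linear_combination ⟪e0, x⟫_ℂ * h3 + ⟪e1, x⟫_ℂ * h2
    rw [e1eq, e2eq]
  · intro x y
    simp only [inner_add_left, inner_add_right, inner_smul_left, inner_smul_right,
      h00, h11, h01, h10, mul_one, mul_zero, add_zero, zero_add, map_add, map_mul,
      Complex.conj_conj]
    conv_rhs => rw [hspan x, hspan y]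
    simp only [inner_add_left, inner_add_right, inner_smul_left, inner_smul_right,
      h00, h11, h01, h10, mul_one, mul_zero, add_zero, zero_add, map_add, map_mul,
      Complex.conj_conj]
    linear_combination (⟪e0, x⟫_ℂ * conj ⟪e0, y⟫_ℂ) * h1 + (⟪e1, x⟫_ℂ * conj ⟪e1, y⟫_ℂ) * h2
      + (⟪e0, x⟫_ℂ * conj ⟪e1, y⟫_ℂ) * h3 + (⟪e1, x⟫_ℂ * conj ⟪e0, y⟫_ℂ) * h3'
  · intro x
    set z0 := ⟪e0, x⟫_ℂ with hz0
    set z1 := ⟪e1, x⟫_ℂ with hz1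
    set w : H := adjoint T ((α * conj z0 + β * conj z1) • e0
      + (β * conj z0 + γ * conj z1) • e1) with hw
    have hw0 : ⟪e0, w⟫_ℂ = conj a * (α * conj z0 + β * conj z1)
        + conj c * (β * conj z0 + γ * conj z1) := by
      rw [hw, ContinuousLinearMap.adjoint_inner_right]
      rw [inner_add_right, inner_smul_right, inner_smul_right, ha, hc]
      simp only [inner_conj_symm]
      ring
    have hw1 : ⟪e1, w⟫_ℂ = conj bb * (α * conj z0 + β * conj z1)
        + conj d * (β * conj z0 + γ * conj z1) := by
      rw [hw, ContinuousLinearMap.adjoint_inner_right]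
      rw [inner_add_right, inner_smul_right, inner_smul_right, hb, hd]
      simp only [inner_conj_symm]
      ring
    have hTx0 : ⟪e0, T x⟫_ℂ = a * z0 + bb * z1 := by
      conv_lhs => rw [hspan x, ← hz0, ← hz1]
      rw [map_add, map_smul, map_smul, inner_add_right, inner_smul_right, inner_smul_right]
      ring
    have hTx1 : ⟪e1, T x⟫_ℂ = c * z0 + d * z1 := by
      conv_lhs => rw [hspan x, ← hz0, ← hz1]
      rw [map_add, map_smul, map_smul, inner_add_right, inner_smul_right, inner_smul_right]
      ring
    conv_lhs => rw [hspan (T x)]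
    beta_reduce
    rw [hTx0, hTx1, hw0, hw1]
    have e1eq : a * z0 + bb * z1 =
        α * conj (conj a * (α * conj z0 + β * conj z1) + conj c * (β * conj z0 + γ * conj z1))
        + β * conj (conj bb * (α * conj z0 + β * conj z1) + conj d * (β * conj z0 + γ * conj z1)) := by
      simp only [map_add, map_mul, Complex.conj_conj]
      linear_combination (-(z0 * a) : ℂ) * h1 + (-(z1 * bb)) * h2 + (-(z1 * a)) * h3'
        + (-(z0 * bb)) * h3 + (-(z0 * conj β) - z1 * conj γ) * h4
    have e2eq : c * z0 + d * z1 =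
        β * conj (conj a * (α * conj z0 + β * conj z1) + conj c * (β * conj z0 + γ * conj z1))
        + γ * conj (conj bb * (α * conj z0 + β * conj z1) + conj d * (β * conj z0 + γ * conj z1)) := by
      simp only [map_add, map_mul, Complex.conj_conj]
      linear_combination (-(z0 * c)) * h1 + (-(z1 * d)) * h2 + (-(z1 * c)) * h3'
        + (-(z0 * d)) * h3 + ((z0 * conj α + z1 * conj β)) * h4
    rw [← e1eq, ← e2eq]

theorem complexSymmetric_of_dim_two
    {H : Type*} [NormedAddCommGroup H] [InnerProductSpace ℂ H] [CompleteSpace H]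
    (hdim : Module.finrank ℂ H = 2) (T : H →L[ℂ] H) :
    IsComplexSymmetric T := by
  have hfd : FiniteDimensional ℂ H := FiniteDimensional.of_finrank_pos (by omega)
  let b : OrthonormalBasis (Fin 2) ℂ H := (stdOrthonormalBasis ℂ H).reindex (finCongr hdim)
  have hob := orthonormal_iff_ite.mp b.orthonormal
  have h00 : ⟪b 0, b 0⟫_ℂ = 1 := by simpa using hob 0 0
  have h11 : ⟪b 1, b 1⟫_ℂ = 1 := by simpa using hob 1 1
  have h01 : ⟪b 0, b 1⟫_ℂ = 0 := by simpa using hob 0 1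
  have h10 : ⟪b 1, b 0⟫_ℂ = 0 := by simpa using hob 1 0
  have hspan : ∀ x : H, x = ⟪b 0, x⟫_ℂ • b 0 + ⟪b 1, x⟫_ℂ • b 1 := by
    intro x
    have := b.sum_repr' x
    rw [Fin.sum_univ_two] at this
    exact this.symm
  set e0 := b 0
  set e1 := b 1
  set aa := ⟪e0, T e0⟫_ℂ with ha
  set bb := ⟪e0, T e1⟫_ℂ with hbdef
  set cc := ⟪e1, T e0⟫_ℂ with hcdef
  set dd := ⟪e1, T e1⟫_ℂ with hddef
  by_cases hbc : ‖bb‖ = ‖cc‖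
  · by_cases hb0 : bb = 0
    · have hc0 : cc = 0 := by
        rw [hb0, norm_zero] at hbc
        exact norm_eq_zero.mp hbc.symm
      refine key T e0 e1 h00 h11 h01 h10 hspan 1 0 1 (by simp) (by simp) (by simp) ?_
      simp only [← hbdef, ← hcdef, hb0, hc0]
      ring
    · have hnb : (‖bb‖ : ℂ) ≠ 0 := by simpa using norm_ne_zero_iff.mpr hb0
      refine key T e0 e1 h00 h11 h01 h10 hspan (bb / ‖bb‖) 0 (cc / ‖bb‖) ?_ ?_ (by simp) ?_
      · rw [map_div₀, Complex.conj_ofReal]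
        rw [div_mul_div_comm, mul_comm (conj bb) bb, Complex.mul_conj']
        rw [← Complex.ofReal_mul, ← sq, ← Complex.ofReal_pow, div_self (by simpa using hb0)]
        ring
      · rw [map_div₀, Complex.conj_ofReal]
        rw [div_mul_div_comm, mul_comm (conj cc) cc, Complex.mul_conj']
        rw [← Complex.ofReal_mul, ← sq, ← Complex.ofReal_pow, ← hbc,
          div_self (by simpa using hb0)]
        ring
      · simp only [← hbdef, ← hcdef]
        field_simp
        ring
  · set δ := aa - dd with hδ
    set k : ℝ := ‖cc‖ ^ 2 - ‖bb‖ ^ 2 with hk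
    have hkne : k ≠ 0 := by
      rw [hk]
      intro h
      apply hbc
      have hsq : ‖bb‖ ^ 2 = ‖cc‖ ^ 2 := by linarith [sub_eq_zero.mp h]
      calc ‖bb‖ = Real.sqrt (‖bb‖ ^ 2) := (Real.sqrt_sq (norm_nonneg bb)).symm
        _ = Real.sqrt (‖cc‖ ^ 2) := by rw [hsq]
        _ = ‖cc‖ := Real.sqrt_sq (norm_nonneg cc)
    have hkc : (k : ℂ) ≠ 0 := by exact_mod_cast hkne
    set w : ℂ := (conj cc * δ - bb * conj δ) / (k : ℂ) with hwdef
    have hcw : cc * w + bb * conj w = δ := by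
      rw [hwdef]
      simp only [map_div₀, map_sub, map_mul, Complex.conj_conj, Complex.conj_ofReal]
      rw [← mul_div_assoc, ← mul_div_assoc, ← add_div, div_eq_iff hkc, hk]
      push_cast
      linear_combination δ * Complex.mul_conj' cc - δ * Complex.mul_conj' bb
    set s : ℝ := (Real.sqrt (1 + ‖w‖ ^ 2))⁻¹ with hs
    have hNpos : (0:ℝ) < 1 + ‖w‖ ^ 2 := by positivity
    have hs2 : (s : ℂ) ^ 2 * (1 + (‖w‖ : ℂ) ^ 2) = 1 := by
      have : s ^ 2 * (1 + ‖w‖ ^ 2) = 1 := by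
        rw [hs, inv_pow, Real.sq_sqrt hNpos.le]
        exact inv_mul_cancel₀ hNpos.ne'
      exact_mod_cast this
    refine key T e0 e1 h00 h11 h01 h10 hspan ((s:ℂ) * w) (s:ℂ) (-(s:ℂ) * conj w) ?_ ?_ ?_ ?_
    · simp only [map_mul, Complex.conj_ofReal, Complex.conj_conj]
      linear_combination (s:ℂ)^2 * Complex.mul_conj' w + hs2
    · simp only [map_mul, Complex.conj_ofReal, Complex.conj_conj, map_neg]
      linear_combination (s:ℂ)^2 * Complex.mul_conj' w + hs2
    · simp only [map_mul, Complex.conj_ofReal, Complex.conj_conj, map_neg]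
      ring
    · simp only [← hbdef, ← hcdef, ← ha, ← hddef]
      have hcw' : cc * w + bb * conj w = aa - dd := hcw.trans hδ
      linear_combination (s:ℂ) * hcw'
end
end

section
/- The operator S ⊕ S* on ℓ²(ℕ) ⊕ ℓ²(ℕ), where S is the unilateral shift, is a complex symmetric operator. -/
noncomputable section

open ContinuousLinearMap

lemma aux_star_single (n : ℕ) (c : ℂ) :
    star (lp.single 2 n c : ellTwo) = lp.single 2 n (star c) := by
  apply lp.ext
  funext j
  rcases eq_or_ne j n with h | h
  · subst h
    simp [lp.single_apply_self]
  · simp [lp.single_apply_ne 2 n _ h, Pi.single_eq_of_ne h]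

lemma aux_single_eq_smul (n : ℕ) (c : ℂ) :
    (lp.single 2 n c : ellTwo) = c • e n := by
  rw [e, ← lp.single_smul, smul_eq_mul, mul_one]

lemma aux_inner_star (x y : ellTwo) :
    (inner ℂ (star x) (star y) : ℂ) = inner ℂ y x := by
  rw [lp.inner_eq_tsum, lp.inner_eq_tsum]
  congr 1
  funext i
  simp only [lp.star_apply, RCLike.inner_apply, starRingEnd_apply, star_star]
  ring

lemma aux_inner_star' (x y : ellTwo) :
    (inner ℂ x (star y) : ℂ) = inner ℂ y (star x) := by
  conv_lhs => rw [← star_star x]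
  rw [aux_inner_star]

lemma aux_S_star (S : ellTwo →L[ℂ] ellTwo) (hS : ∀ n, S (e n) = e (n + 1)) (x : ellTwo) :
    S (star x) = star (S x) := by
  have h2 : (2 : ENNReal) ≠ ⊤ := by norm_num
  have h1 : HasSum (fun n => star (x n) • e (n + 1)) (S (star x)) := by
    have := (lp.hasSum_single h2 (star x)).mapL S
    simpa [lp.star_apply, aux_single_eq_smul, hS] using this
  have h3 : HasSum (fun n => star (x n) • e (n + 1)) (star (S x)) := by
    have := ((lp.hasSum_single h2 x).mapL S).star
    simp only [aux_single_eq_smul, map_smul, hS] at this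
    convert this using 2 with n
    rw [star_smul]
    congr 1
    rw [e, aux_star_single, star_one]
  exact h1.unique h3

lemma aux_t1 (S : ellTwo →L[ℂ] ellTwo) (hS : ∀ n, S (e n) = e (n + 1)) (a b : ellTwo) :
    (inner ℂ (S a) (star b) : ℂ) = inner ℂ a (star (adjoint S b)) := by
  rw [aux_inner_star' (S a) b, ← aux_S_star S hS, ← adjoint_inner_left, aux_inner_star']

lemma aux_t2 (S : ellTwo →L[ℂ] ellTwo) (hS : ∀ n, S (e n) = e (n + 1)) (a b : ellTwo) :
    (inner ℂ (adjoint S a) (star b) : ℂ) = inner ℂ a (star (S b)) := by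
  rw [adjoint_inner_left, aux_S_star S hS]

theorem shift_oplus_adjoint_shift_complexSymmetric
    (S : ellTwo →L[ℂ] ellTwo) (hS : ∀ n, S (e n) = e (n + 1))
    (D : WithLp 2 (ellTwo × ellTwo) →L[ℂ] WithLp 2 (ellTwo × ellTwo))
    (hD : ∀ x, D x = (WithLp.equiv 2 (ellTwo × ellTwo)).symm
      (S ((WithLp.equiv 2 (ellTwo × ellTwo)) x).1,
       adjoint S ((WithLp.equiv 2 (ellTwo × ellTwo)) x).2)) :
    IsComplexSymmetric D := by
  refine ⟨fun z => (WithLp.equiv 2 (ellTwo × ellTwo)).symm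
      (star ((WithLp.equiv 2 (ellTwo × ellTwo)) z).2,
       star ((WithLp.equiv 2 (ellTwo × ellTwo)) z).1), ⟨?_, ?_, ?_, ?_⟩, ?_⟩
  · intro x y
    apply (WithLp.equiv 2 (ellTwo × ellTwo)).injective
    simp only [Equiv.apply_symm_apply, WithLp.ofLp_add, Prod.mk_add_mk, Prod.mk.injEq,
      WithLp.equiv_apply, WithLp.ofLp_fst, WithLp.ofLp_snd, WithLp.add_fst, WithLp.add_snd, Prod.fst_add,
      Prod.snd_add, star_add, WithLp.equiv_symm_apply, WithLp.ofLp_toLp]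
  · intro a x
    apply (WithLp.equiv 2 (ellTwo × ellTwo)).injective
    simp only [Equiv.apply_symm_apply, WithLp.ofLp_smul, Prod.smul_mk, Prod.mk.injEq,
      WithLp.equiv_apply, WithLp.ofLp_fst, WithLp.ofLp_snd, WithLp.smul_fst, WithLp.smul_snd, Prod.smul_fst,
      Prod.smul_snd, star_smul, starRingEnd_apply, WithLp.equiv_symm_apply, WithLp.ofLp_toLp]
  · intro x
    apply (WithLp.equiv 2 (ellTwo × ellTwo)).injective
    simp only [Equiv.apply_symm_apply, WithLp.equiv_apply, WithLp.ofLp_fst, WithLp.ofLp_snd,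
      WithLp.equiv_symm_apply, WithLp.toLp_fst, WithLp.toLp_snd, star_star]
    rfl
  · intro x y
    simp only [WithLp.prod_inner_apply, WithLp.equiv_symm_apply, WithLp.toLp_fst, WithLp.toLp_snd,
      WithLp.equiv_apply, WithLp.ofLp_fst, WithLp.ofLp_snd]
    rw [aux_inner_star, aux_inner_star]
    ring
  · intro x
    have key : adjoint D ((WithLp.equiv 2 (ellTwo × ellTwo)).symm
        (star ((WithLp.equiv 2 (ellTwo × ellTwo)) x).2,
         star ((WithLp.equiv 2 (ellTwo × ellTwo)) x).1)) =
        (WithLp.equiv 2 (ellTwo × ellTwo)).symm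
        (star ((WithLp.equiv 2 (ellTwo × ellTwo)) (D x)).2,
         star ((WithLp.equiv 2 (ellTwo × ellTwo)) (D x)).1) := by
      apply ext_inner_left ℂ
      intro y
      rw [adjoint_inner_right]
      simp only [hD, WithLp.prod_inner_apply, WithLp.equiv_symm_apply, WithLp.toLp_fst, WithLp.toLp_snd,
        WithLp.equiv_apply, WithLp.ofLp_fst, WithLp.ofLp_snd, Equiv.apply_symm_apply]
      rw [aux_t1 S hS, aux_t2 S hS]
    rw [key]
    apply (WithLp.equiv 2 (ellTwo × ellTwo)).injective
    simp only [Equiv.apply_symm_apply, WithLp.equiv_symm_apply, WithLp.toLp_fst, WithLp.toLp_snd, star_star,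
    WithLp.equiv_apply, WithLp.ofLp_toLp, Prod.mk.eta]
end
end

section
/- If A ∈ B(H) and K is a conjugation on H with KA = A*K, then K√(I − A*A) = √(I − AA*)K and KA commutes with √(I − A*A), provided ‖A‖ ≤ 1. -/
noncomputable section

open ContinuousLinearMap

set_option maxHeartbeats 1000000
set_option synthInstance.maxHeartbeats 1000000

open Polynomial in
lemma cfc_intertwine {H : Type*} [NormedAddCommGroup H] [InnerProductSpace ℂ H]
    [CompleteSpace H] [Nontrivial H]
    (a c b : H →L[ℂ] H) (ha : IsSelfAdjoint a) (hc : IsSelfAdjoint c)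
    (h : b * a = c * b) (f : ℝ → ℝ) (hf : Continuous f) :
    b * cfc f a = cfc f c * b := by
  have hpow : ∀ n : ℕ, b * a ^ n = c ^ n * b := by
    intro n; induction n with
    | zero => simp
    | succ n ih => rw [pow_succ, pow_succ, ← mul_assoc, ih, mul_assoc, h, ← mul_assoc]
  have hpoly : ∀ p : ℝ[X], b * Polynomial.aeval a p = Polynomial.aeval c p * b := by
    intro p
    induction p using Polynomial.induction_on with
    | C r =>
        simp only [Polynomial.aeval_C]
        exact (Algebra.commutes r b).symm
    | add p q hp hq => simp only [map_add, mul_add, add_mul, hp, hq]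
    | monomial n r _ =>
        simp only [map_mul, Polynomial.aeval_C, map_pow, Polynomial.aeval_X]
        rw [← mul_assoc, ← Algebra.commutes r b, mul_assoc, hpow, ← mul_assoc,
          Algebra.commutes r, mul_assoc]
  set M : ℝ := max ‖a‖ ‖c‖ with hM
  have hsa : spectrum ℝ a ⊆ Set.Icc (-M) M := by
    intro x hx
    have h1 : ‖x‖ ≤ ‖a‖ := spectrum.norm_le_norm_of_mem hx
    rw [Real.norm_eq_abs] at h1
    exact Set.mem_Icc.mpr (abs_le.mp (h1.trans (le_max_left _ _)))
  have hsc : spectrum ℝ c ⊆ Set.Icc (-M) M := by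
    intro x hx
    have h1 : ‖x‖ ≤ ‖c‖ := spectrum.norm_le_norm_of_mem hx
    rw [Real.norm_eq_abs] at h1
    exact Set.mem_Icc.mpr (abs_le.mp (h1.trans (le_max_right _ _)))
  have key : ∀ ε : ℝ, 0 < ε → ‖b * cfc f a - cfc f c * b‖ ≤ ε * (2 * ‖b‖) := by
    intro ε hε
    obtain ⟨p, hp⟩ := exists_polynomial_near_of_continuousOn (-M) M f hf.continuousOn ε hε
    have hmid : b * cfc (fun x => p.eval x) a = cfc (fun x => p.eval x) c * b := by
      rw [cfc_polynomial p a, cfc_polynomial p c]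
      exact hpoly p
    have hsplit : b * cfc f a - cfc f c * b
        = b * (cfc f a - cfc (fun x => p.eval x) a)
          + (cfc (fun x => p.eval x) c - cfc f c) * b := by
      rw [mul_sub, sub_mul, hmid]; abel
    have hna : ‖cfc f a - cfc (fun x => p.eval x) a‖ ≤ ε := by
      rw [← cfc_sub f (fun x => p.eval x) a]
      refine norm_cfc_le hε.le fun x hx => ?_
      rw [Real.norm_eq_abs, abs_sub_comm]
      exact (hp x (hsa hx)).le
    have hnc : ‖cfc (fun x => p.eval x) c - cfc f c‖ ≤ ε := by
      rw [← cfc_sub (fun x => p.eval x) f c]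
      refine norm_cfc_le hε.le fun x hx => ?_
      rw [Real.norm_eq_abs]
      exact (hp x (hsc hx)).le
    calc ‖b * cfc f a - cfc f c * b‖
        ≤ ‖b * (cfc f a - cfc (fun x => p.eval x) a)‖
          + ‖(cfc (fun x => p.eval x) c - cfc f c) * b‖ := by rw [hsplit]; exact norm_add_le _ _
      _ ≤ ‖b‖ * ε + ε * ‖b‖ :=
          add_le_add
            ((norm_mul_le _ _).trans (mul_le_mul_of_nonneg_left hna (norm_nonneg b)))
            ((norm_mul_le _ _).trans (mul_le_mul_of_nonneg_right hnc (norm_nonneg b)))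
      _ = ε * (2 * ‖b‖) := by ring
  have h0 : ‖b * cfc f a - cfc f c * b‖ ≤ 0 := by
    by_contra h'
    push_neg at h'
    have hb1 : (0:ℝ) < 2 * ‖b‖ + 1 := by positivity
    have hkey := key (‖b * cfc f a - cfc f c * b‖ / (2 * (2 * ‖b‖ + 1))) (by positivity)
    rw [div_mul_eq_mul_div, le_div_iff₀ (by positivity)] at hkey
    nlinarith [h', norm_nonneg b]
  exact sub_eq_zero.mp (norm_le_zero_iff.mp h0)

theorem conjugation_aux
    {H : Type*} [NormedAddCommGroup H] [InnerProductSpace ℂ H] [CompleteSpace H]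
    [Nontrivial H]
    (A : H →L[ℂ] H)
    (K : H → H)
    (hadd : ∀ x y, K (x + y) = K x + K y)
    (hsmul : ∀ (a : ℂ) (x : H), K (a • x) = (starRingEnd ℂ) a • K x)
    (hinv : ∀ x, K (K x) = x)
    (hinner : ∀ x y : H, (inner ℂ (K x) (K y) : ℂ) = inner ℂ y x)
    (hKA : ∀ x, K (A x) = adjoint A (K x))
    (R : H →L[ℂ] H) (hR : R.IsPositive) (hR2 : R ∘L R = 1 - adjoint A ∘L A)
    (Q : H →L[ℂ] H) (hQ : Q.IsPositive) (hQ2 : Q ∘L Q = 1 - A ∘L adjoint A) :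
    (∀ x, K (R x) = Q (K x)) ∧ (∀ x, K (A (R x)) = R (K (A x))) := by
  -- K A* = A K
  have hKAstar : ∀ x, K (adjoint A x) = A (K x) := by
    intro x
    have h1 : K (A (K x)) = adjoint A x := by rw [hKA (K x), hinv]
    rw [← h1, hinv]
  -- K preserves norms
  have hnorm : ∀ x, ‖K x‖ = ‖x‖ := by
    intro x
    have h1 : (inner ℂ (K x) (K x) : ℂ) = inner ℂ x x := hinner x x
    rw [inner_self_eq_norm_sq_to_K (𝕜 := ℂ), inner_self_eq_norm_sq_to_K (𝕜 := ℂ)] at h1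
    have h2 : (‖K x‖ : ℝ) ^ 2 = ‖x‖ ^ 2 := by exact_mod_cast h1
    calc ‖K x‖ = Real.sqrt (‖K x‖ ^ 2) := (Real.sqrt_sq (norm_nonneg _)).symm
      _ = Real.sqrt (‖x‖ ^ 2) := by rw [h2]
      _ = ‖x‖ := Real.sqrt_sq (norm_nonneg _)
  -- the linear map B = K R K
  have hBl_add : ∀ x y, K (R (K (x + y))) = K (R (K x)) + K (R (K y)) := by
    intro x y; rw [hadd, map_add, hadd]
  have hBl_smul : ∀ (a : ℂ) (x : H), K (R (K (a • x))) = a • K (R (K x)) := by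
    intro a x
    rw [hsmul, map_smul, hsmul, Complex.conj_conj]
  set Bl : H →ₗ[ℂ] H :=
    { toFun := fun x => K (R (K x)),
      map_add' := hBl_add,
      map_smul' := hBl_smul } with hBldef
  have hBl_bound : ∀ x, ‖Bl x‖ ≤ ‖R‖ * ‖x‖ := by
    intro x
    show ‖K (R (K x))‖ ≤ ‖R‖ * ‖x‖
    rw [hnorm, ← hnorm x]
    exact R.le_opNorm (K x)
  set B : H →L[ℂ] H := Bl.mkContinuous ‖R‖ hBl_bound with hBdef
  have hBapp : ∀ x, B x = K (R (K x)) := fun _ => rfl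
  -- B is positive
  have hRsymm := (ContinuousLinearMap.isSelfAdjoint_iff_isSymmetric).mp hR.isSelfAdjoint
  have hBpos : B.IsPositive := by
    constructor
    · intro x y
      show (inner ℂ (K (R (K x))) y : ℂ) = inner ℂ x (K (R (K y)))
      calc (inner ℂ (K (R (K x))) y : ℂ)
          = inner ℂ (K (R (K x))) (K (K y)) := by rw [hinv]
        _ = inner ℂ (K y) (R (K x)) := hinner _ _
        _ = inner ℂ (R (K y)) (K x) := (hRsymm (K y) (K x)).symm
        _ = inner ℂ (K (K x)) (K (R (K y))) := (hinner (K x) (R (K y))).symm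
        _ = inner ℂ x (K (R (K y))) := by rw [hinv]
    · intro x
      have h1 : (inner ℂ (B x) x : ℂ) = inner ℂ (K x) (R (K x)) := by
        calc (inner ℂ (B x) x : ℂ)
            = inner ℂ (K (R (K x))) (K (K x)) := by rw [hBapp, hinv]
          _ = inner ℂ (K x) (R (K x)) := hinner _ _
      have h2 : Complex.re (inner ℂ (B x) x : ℂ) = Complex.re (inner ℂ (R (K x)) (K x) : ℂ) := by
        rw [h1, ← inner_conj_symm]
        exact Complex.conj_re _
      show 0 ≤ Complex.re (inner ℂ (B x) x : ℂ)
      rw [h2]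
      exact hR.2 (K x)
  -- subtraction for K
  have hsub : ∀ x y, K (x - y) = K x - K y := by
    intro x y
    have := hadd (x - y) y
    rw [sub_add_cancel] at this
    rw [eq_sub_of_add_eq this.symm]
  -- B * B = 1 - A A*
  have hBB : B * B = 1 - A * adjoint A := by
    ext x
    show K (R (K (K (R (K x))))) = x - A (adjoint A x)
    rw [hinv]
    have h1 : R (R (K x)) = K x - adjoint A (A (K x)) := by
      have := congrFun (congrArg DFunLike.coe hR2) (K x)
      simpa using this
    rw [h1, hsub, hinv, hKAstar, hKA, hinv]
  -- positivity transfers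
  have hRpos : (0:H →L[ℂ] H) ≤ R := (ContinuousLinearMap.nonneg_iff_isPositive R).mpr hR
  have hQpos : (0:H →L[ℂ] H) ≤ Q := (ContinuousLinearMap.nonneg_iff_isPositive Q).mpr hQ
  have hBpos' : (0:H →L[ℂ] H) ≤ B := (ContinuousLinearMap.nonneg_iff_isPositive B).mpr hBpos
  have hR2' : R * R = 1 - adjoint A * A := hR2
  have hQ2' : Q * Q = 1 - A * adjoint A := hQ2
  have eQ : CFC.sqrt (1 - A * adjoint A) = Q := CFC.sqrt_unique hQ2' hQpos
  have eB : CFC.sqrt (1 - A * adjoint A) = B := CFC.sqrt_unique hBB hBpos'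
  have hQB : Q = B := eQ.symm.trans eB
  have part1 : ∀ x, K (R x) = Q (K x) := by
    intro x
    rw [hQB, hBapp, hinv]
  refine ⟨part1, ?_⟩
  -- intertwining
  have hu : (0:H →L[ℂ] H) ≤ 1 - adjoint A * A := by
    rw [← hR2']
    calc (0:H →L[ℂ] H) ≤ star R * R := star_mul_self_nonneg R
      _ = R * R := by rw [hR.isSelfAdjoint]
  have hv : (0:H →L[ℂ] H) ≤ 1 - A * adjoint A := by
    rw [← hQ2']
    calc (0:H →L[ℂ] H) ≤ star Q * Q := star_mul_self_nonneg Q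
      _ = Q * Q := by rw [hQ.isSelfAdjoint]
  have hRc : R = cfc Real.sqrt (1 - adjoint A * A) := by
    have h1 : cfc Real.sqrt (1 - adjoint A * A) * cfc Real.sqrt (1 - adjoint A * A)
        = 1 - adjoint A * A := by
      rw [← cfc_mul Real.sqrt Real.sqrt _]
      have hcg : cfc (fun x => Real.sqrt x * Real.sqrt x) (1 - adjoint A * A)
          = cfc (id : ℝ → ℝ) (1 - adjoint A * A) :=
        cfc_congr (fun x hx => Real.mul_self_sqrt (spectrum_nonneg_of_nonneg hu hx))
      rw [hcg]
      exact cfc_id ℝ _ (IsSelfAdjoint.of_nonneg hu)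
    have h2 : (0:H →L[ℂ] H) ≤ cfc Real.sqrt (1 - adjoint A * A) :=
      cfc_nonneg (fun x _ => Real.sqrt_nonneg x)
    have e1 : CFC.sqrt (1 - adjoint A * A) = R := CFC.sqrt_unique hR2' hRpos
    have e2 : CFC.sqrt (1 - adjoint A * A) = cfc Real.sqrt (1 - adjoint A * A) :=
      CFC.sqrt_unique h1 h2
    exact e1.symm.trans e2
  have hQc : Q = cfc Real.sqrt (1 - A * adjoint A) := by
    have h1 : cfc Real.sqrt (1 - A * adjoint A) * cfc Real.sqrt (1 - A * adjoint A)
        = 1 - A * adjoint A := by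
      rw [← cfc_mul Real.sqrt Real.sqrt _]
      have hcg : cfc (fun x => Real.sqrt x * Real.sqrt x) (1 - A * adjoint A)
          = cfc (id : ℝ → ℝ) (1 - A * adjoint A) :=
        cfc_congr (fun x hx => Real.mul_self_sqrt (spectrum_nonneg_of_nonneg hv hx))
      rw [hcg]
      exact cfc_id ℝ _ (IsSelfAdjoint.of_nonneg hv)
    have h2 : (0:H →L[ℂ] H) ≤ cfc Real.sqrt (1 - A * adjoint A) :=
      cfc_nonneg (fun x _ => Real.sqrt_nonneg x)
    have e2 : CFC.sqrt (1 - A * adjoint A) = cfc Real.sqrt (1 - A * adjoint A) :=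
      CFC.sqrt_unique h1 h2
    exact eQ.symm.trans e2
  have hcomm : A * (1 - adjoint A * A) = (1 - A * adjoint A) * A := by noncomm_ring
  have hAR : A * R = Q * A := by
    rw [hRc, hQc]
    exact cfc_intertwine _ _ A (IsSelfAdjoint.of_nonneg hu) (IsSelfAdjoint.of_nonneg hv)
      hcomm Real.sqrt Real.continuous_sqrt
  have hKQ : ∀ z, K (Q z) = R (K z) := by
    intro z
    have h6 := part1 (K z)
    rw [hinv] at h6
    rw [← h6, hinv]
  intro x
  have h7 : A (R x) = Q (A x) := by
    have := congrFun (congrArg DFunLike.coe hAR) x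
    simpa using this
  rw [h7, hKQ]


/-- If `K` is a conjugation with `KA = A*K` and `‖A‖ ≤ 1`, then
`K√(I − A*A) = √(I − AA*)K` and `KA` commutes with `√(I − A*A)`; here the
positive square roots `√(I − A*A)` and `√(I − AA*)` are described as the
positive operators `R`, `Q` with `R² = I − A*A`, `Q² = I − AA*`. -/
theorem conjugation_sqrt_commutation
    {H : Type*} [NormedAddCommGroup H] [InnerProductSpace ℂ H] [CompleteSpace H]
    (A : H →L[ℂ] H) (hA : ‖A‖ ≤ 1)
    (K : H → H) (hK : IsConjugation K)
    (hKA : ∀ x, K (A x) = adjoint A (K x))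
    (R : H →L[ℂ] H) (hR : R.IsPositive) (hR2 : R ∘L R = 1 - adjoint A ∘L A)
    (Q : H →L[ℂ] H) (hQ : Q.IsPositive) (hQ2 : Q ∘L Q = 1 - A ∘L adjoint A) :
    (∀ x, K (R x) = Q (K x)) ∧ (∀ x, K (A (R x)) = R (K (A x))) := by
  obtain ⟨hadd, hsmul, hinv, hinner⟩ := hK
  rcases subsingleton_or_nontrivial H with hH | hH
  · exact ⟨fun x => Subsingleton.elim _ _, fun x => Subsingleton.elim _ _⟩
  · exact conjugation_aux A K hadd hsmul hinv hinner hKA R hR hR2 Q hQ hQ2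
end
end

section
/- Let T be a partial isometry on H with block form [[A, 0], [B, 0]] relative to H = H₁ ⊕ H₂ where H₁ = (ker T)^⊥ and H₂ = ker T, with closure of ran B equal to H₂. Let B = V|B| be the polar decomposition and K a conjugation on H₁ with KA = A*K. Then the conjugate-linear block operator C = [[AK, KB*], [BK, −VA*KV*]] satisfies C² = I and is isometric, i.e., C is a conjugation on H, and T = CJ|T| where J = K ⊕ 0. -/
noncomputable section

open ContinuousLinearMap Polynomial
open scoped ContinuousFunctionalCalculus

lemma commute_cfc_aux {G : Type*} [NormedAddCommGroup G] [InnerProductSpace ℂ G]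
    [CompleteSpace G] {a b : G →L[ℂ] G} (ha : IsSelfAdjoint a) (hab : Commute b a)
    (f : ℝ → ℝ) : Commute b (cfc f a) := by
  by_cases hf : ContinuousOn f (spectrum ℝ a)
  · rw [cfc_apply f a ha hf]
    set φ := cfcHom (R := ℝ) ha with hφdef
    have hφc : Continuous φ := cfcHom_continuous ha
    have key : ∀ g : C(spectrum ℝ a, ℝ), Commute b (φ g) := by
      have hD : IsClosed {g : C(spectrum ℝ a, ℝ) | Commute b (φ g)} := by
        have he : {g : C(spectrum ℝ a, ℝ) | Commute b (φ g)}
            = {g : C(spectrum ℝ a, ℝ) | b * φ g = φ g * b} := rfl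
        rw [he]
        exact isClosed_eq (continuous_const.mul hφc) (hφc.mul continuous_const)
      have hX : Commute b (φ (toContinuousMapOnAlgHom (spectrum ℝ a) X)) := by
        have hco : (toContinuousMapOnAlgHom (spectrum ℝ a) X : C(spectrum ℝ a, ℝ))
            = (ContinuousMap.id ℝ).restrict (spectrum ℝ a) := by ext x; simp
        rw [hco, cfcHom_id ha]
        exact hab
      have hpoly : ∀ p : ℝ[X], Commute b (φ (toContinuousMapOnAlgHom (spectrum ℝ a) p)) := by
        intro p
        induction p using Polynomial.induction_on with
        | C r =>
          have : (C r : ℝ[X]) = algebraMap ℝ ℝ[X] r := rfl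
          rw [this, AlgHomClass.commutes, AlgHomClass.commutes]
          exact Algebra.commute_algebraMap_right r b
        | add p q hp hq => simpa [map_add] using Commute.add_right hp hq
        | monomial n r hn =>
          have : (C r * X ^ (n + 1) : ℝ[X]) = (C r * X ^ n) * X := by ring
          rw [this, map_mul, map_mul]
          exact Commute.mul_right hn hX
      intro g
      have hsub : ((polynomialFunctions (spectrum ℝ a)) : Set C(spectrum ℝ a, ℝ))
          ⊆ {g : C(spectrum ℝ a, ℝ) | Commute b (φ g)} := by
        rintro - ⟨p, -, rfl⟩
        exact hpoly p
      have huniv : closure ((polynomialFunctions (spectrum ℝ a)) : Set C(spectrum ℝ a, ℝ))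
          = Set.univ := by
        have h1 := polynomialFunctions.topologicalClosure (spectrum ℝ a)
        have h2 : ((polynomialFunctions (spectrum ℝ a)).topologicalClosure
            : Set C(spectrum ℝ a, ℝ)) = ((⊤ : Subalgebra ℝ C(spectrum ℝ a, ℝ)) : Set _) := by
          rw [h1]
        simpa [Subalgebra.topologicalClosure_coe] using h2
      have : g ∈ closure ((polynomialFunctions (spectrum ℝ a)) : Set C(spectrum ℝ a, ℝ)) := by
        rw [huniv]; trivial
      exact closure_minimal hsub hD this
    exact key _
  · rw [cfc_apply_of_not_continuousOn a hf]
    exact Commute.zero_right b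

lemma commute_sqrt {G : Type*} [NormedAddCommGroup G] [InnerProductSpace ℂ G]
    [CompleteSpace G] {x b : G →L[ℂ] G} (hx : (0:G→L[ℂ]G) ≤ x) (h : Commute b (x^2)) :
    Commute b x := by
  have hsa : IsSelfAdjoint x := .of_nonneg hx
  have hx2 : (0:G→L[ℂ]G) ≤ x^2 := by
    simpa [pow_two, hsa.star_eq] using star_mul_self_nonneg x
  have hsa2 : IsSelfAdjoint (x^2) := .of_nonneg hx2
  have hY := commute_cfc_aux hsa2 h Real.sqrt
  have hYx : cfc Real.sqrt (x^2) = x := by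
    have hYnn : (0:G→L[ℂ]G) ≤ cfc Real.sqrt (x^2) :=
      cfc_nonneg fun t _ => Real.sqrt_nonneg t
    have hYsq : (cfc Real.sqrt (x^2))^2 = x^2 := by
      rw [pow_two, ← cfc_mul ..]
      calc cfc (fun t => Real.sqrt t * Real.sqrt t) (x^2)
          = cfc (fun t : ℝ => t) (x^2) := by
            refine cfc_congr fun t ht => ?_
            exact Real.mul_self_sqrt ((StarOrderedRing.nonneg_iff_spectrum_nonneg _).mp hx2 t ht)
        _ = x^2 := cfc_id ℝ (x^2)
    rw [← CFC.sqrt_sq (cfc Real.sqrt (x^2)) hYnn, hYsq, CFC.sqrt_sq x hx]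
  rwa [hYx] at hY

lemma intertwine_sqrt {H₁ : Type*} [NormedAddCommGroup H₁] [InnerProductSpace ℂ H₁]
    [CompleteSpace H₁] (A R S : H₁ →L[ℂ] H₁) (hR : R.IsPositive) (hS : S.IsPositive)
    (h2 : S ∘L (S ∘L A) = A ∘L (R ∘L R)) : S ∘L A = A ∘L R := by
  classical
  set e := WithLp.prodContinuousLinearEquiv 2 ℂ H₁ H₁ with he
  set X : WithLp 2 (H₁ × H₁) →L[ℂ] WithLp 2 (H₁ × H₁) :=
    e.symm.toContinuousLinearMap ∘L ((R.prodMap S) ∘L e.toContinuousLinearMap) with hX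
  set M : WithLp 2 (H₁ × H₁) →L[ℂ] WithLp 2 (H₁ × H₁) :=
    e.symm.toContinuousLinearMap ∘L ((ContinuousLinearMap.inr ℂ H₁ H₁ ∘L
      (A ∘L ContinuousLinearMap.fst ℂ H₁ H₁)) ∘L e.toContinuousLinearMap) with hM
  have hXapp : ∀ v : WithLp 2 (H₁ × H₁),
      X v = e.symm (R (e v).1, S (e v).2) := fun v => rfl
  have hMapp : ∀ v : WithLp 2 (H₁ × H₁),
      M v = e.symm (0, A (e v).1) := fun v => rfl
  have heapp : ∀ p : H₁ × H₁, e (e.symm p) = p := fun p => e.apply_symm_apply p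
  have hXnn : (0 : WithLp 2 (H₁ × H₁) →L[ℂ] WithLp 2 (H₁ × H₁)) ≤ X := by
    rw [ContinuousLinearMap.nonneg_iff_isPositive]
    refine isPositive_def'.mpr ⟨?_, ?_⟩
    · rw [isSelfAdjoint_iff_isSymmetric]
      intro x y
      show (inner ℂ (X x) y : ℂ) = inner ℂ x (X y)
      rw [hXapp, hXapp]
      simp only [WithLp.prod_inner_apply]
      have h1 := (isSelfAdjoint_iff_isSymmetric.mp hR.isSelfAdjoint) (e x).1 (e y).1
      have h2 := (isSelfAdjoint_iff_isSymmetric.mp hS.isSelfAdjoint) (e x).2 (e y).2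
      simp only [he, WithLp.prodContinuousLinearEquiv_apply,
        WithLp.prodContinuousLinearEquiv_symm_apply, WithLp.toLp_fst,
        WithLp.toLp_snd, WithLp.ofLp_fst, WithLp.ofLp_snd] at *
      exact congrArg₂ (· + ·) h1 h2
    · intro x
      rw [ContinuousLinearMap.reApplyInnerSelf_apply]
      rw [hXapp]
      simp only [WithLp.prod_inner_apply, map_add]
      have h1 := hR.2 (e x).1
      have h2 := hS.2 (e x).2
      rw [ContinuousLinearMap.reApplyInnerSelf_apply] at h1 h2
      simp only [he, WithLp.prodContinuousLinearEquiv_apply,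
        WithLp.prodContinuousLinearEquiv_symm_apply, WithLp.toLp_fst,
        WithLp.toLp_snd, WithLp.ofLp_fst, WithLp.ofLp_snd] at *
      positivity
  have hcomm : Commute M (X^2) := by
    show M * X^2 = X^2 * M
    ext v
    show (M ∘L (X ∘L X)) v = (X ∘L (X ∘L M)) v
    simp only [ContinuousLinearMap.comp_apply, hXapp, hMapp, heapp]
    have := congrFun (congrArg DFunLike.coe h2) (e v).1
    simp only [ContinuousLinearMap.comp_apply] at this
    simp only [he, WithLp.prodContinuousLinearEquiv_apply,
      WithLp.prodContinuousLinearEquiv_symm_apply, WithLp.toLp_fst,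
      WithLp.toLp_snd, WithLp.ofLp_fst, WithLp.ofLp_snd] at *
    simp [this, map_zero]
  have hMX : Commute M X := commute_sqrt hXnn hcomm
  ext u
  have := congrFun (congrArg DFunLike.coe hMX.symm.eq) (e.symm (u, 0))
  show (S ∘L A) u = A (R u)
  simp only [ContinuousLinearMap.mul_apply, hXapp, hMapp, heapp] at this
  simp only [ContinuousLinearMap.comp_apply]
  simp only [he, WithLp.prodContinuousLinearEquiv_apply,
    WithLp.prodContinuousLinearEquiv_symm_apply, WithLp.toLp_fst,
    WithLp.toLp_snd, WithLp.ofLp_fst, WithLp.ofLp_snd, map_zero] at this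
  have h2' := congrArg (fun p => ((WithLp.equiv 2 (H₁ × H₁)) p).2) this
  have h3 : S (A u) = A (R u) := by simpa using h2'
  exact h3

set_option maxHeartbeats 2000000

/-- For a partial isometry with block form `[[A, 0], [B, 0]]` relative to
`H = H₁ ⊕ H₂` (so `A*A + B*B = 1`), with `ran B` dense in `H₂`, polar
decomposition `B = V|B|` (where `|B| = √(I − A*A)` is the positive operator `R`
with `R² = 1 − A*A`, and `V*B = |B|`, `VV* = 1` since the final space of `V` is
`H₂`), and `K` a conjugation on `H₁` with `KA = A*K`, the conjugate-linear
block operator `C = [[AK, KB*], [BK, −VA*KV*]]` is a conjugation on `H`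
(additive, conjugate-homogeneous, involutive, and isometric), and
`T = C J |T|` with `J = K ⊕ 0` and `|T| = I_{H₁} ⊕ 0`. -/
theorem conjugation_block_construction
    {H₁ H₂ : Type*} [NormedAddCommGroup H₁] [InnerProductSpace ℂ H₁] [CompleteSpace H₁]
    [NormedAddCommGroup H₂] [InnerProductSpace ℂ H₂] [CompleteSpace H₂]
    (A : H₁ →L[ℂ] H₁) (B : H₁ →L[ℂ] H₂)
    (hAB : adjoint A ∘L A + adjoint B ∘L B = 1)
    (hBdense : Dense (Set.range B))
    (R : H₁ →L[ℂ] H₁) (hR : R.IsPositive) (hR2 : R ∘L R = 1 - adjoint A ∘L A)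
    (V : H₁ →L[ℂ] H₂) (hpolar : B = V ∘L R) (hVB : adjoint V ∘L B = R)
    (hVV : V ∘L adjoint V = 1)
    (K : H₁ → H₁) (hK : IsConjugation K)
    (hKA : ∀ x, K (A x) = adjoint A (K x))
    (T : WithLp 2 (H₁ × H₂) →L[ℂ] WithLp 2 (H₁ × H₂))
    (hT : ∀ x, T x = (WithLp.equiv 2 (H₁ × H₂)).symm
      (A ((WithLp.equiv 2 (H₁ × H₂)) x).1, B ((WithLp.equiv 2 (H₁ × H₂)) x).1))
    (C : WithLp 2 (H₁ × H₂) → WithLp 2 (H₁ × H₂))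
    (hC : ∀ x, C x = (WithLp.equiv 2 (H₁ × H₂)).symm
      (A (K ((WithLp.equiv 2 (H₁ × H₂)) x).1) +
         K (adjoint B ((WithLp.equiv 2 (H₁ × H₂)) x).2),
       B (K ((WithLp.equiv 2 (H₁ × H₂)) x).1) -
         V (adjoint A (K (adjoint V ((WithLp.equiv 2 (H₁ × H₂)) x).2)))))
    (J : WithLp 2 (H₁ × H₂) → WithLp 2 (H₁ × H₂))
    (hJ : ∀ x, J x = (WithLp.equiv 2 (H₁ × H₂)).symm
      (K ((WithLp.equiv 2 (H₁ × H₂)) x).1, 0))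
    (Tabs : WithLp 2 (H₁ × H₂) →L[ℂ] WithLp 2 (H₁ × H₂))
    (hTabs : ∀ x, Tabs x = (WithLp.equiv 2 (H₁ × H₂)).symm
      (((WithLp.equiv 2 (H₁ × H₂)) x).1, 0)) :
    IsConjugation C ∧ ∀ x, T x = C (J (Tabs x)) := by
  obtain ⟨Kadd, Ksmul, Kinv, Kinner⟩ := hK
  -- basic facts about K
  have Kzero : K 0 = 0 := by
    have h := Kadd 0 0
    rw [add_zero] at h
    exact (left_eq_add.mp h)
  have Ksub : ∀ x y, K (x - y) = K x - K y := by
    intro x y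
    have h := Kadd (x - y) y
    rw [sub_add_cancel] at h
    exact eq_sub_of_add_eq h.symm
  have Knorm : ∀ x, ‖K x‖ = ‖x‖ := by
    intro x
    have h := Kinner x x
    rw [inner_self_eq_norm_sq_to_K, inner_self_eq_norm_sq_to_K] at h
    have h2 : ‖K x‖ ^ 2 = ‖x‖ ^ 2 := by exact_mod_cast h
    calc ‖K x‖ = Real.sqrt (‖K x‖ ^ 2) := (Real.sqrt_sq (norm_nonneg _)).symm
      _ = Real.sqrt (‖x‖ ^ 2) := by rw [h2]
      _ = ‖x‖ := Real.sqrt_sq (norm_nonneg _)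
  have Ktrick : ∀ a b : H₁, (inner ℂ a (K b) : ℂ) = inner ℂ b (K a) := by
    intro a b
    conv_lhs => rw [← Kinv a]
    exact Kinner (K a) b
  have Ktrick' : ∀ a b : H₁, (inner ℂ (K a) b : ℂ) = inner ℂ (K b) a := by
    intro a b
    conv_lhs => rw [← Kinv b]
    exact Kinner a (K b)
  have KAstar : ∀ x, K (adjoint A x) = A (K x) := by
    intro x
    have h := hKA (K x)
    rw [Kinv] at h
    have h2 := congrArg K h
    rw [Kinv] at h2
    exact h2.symm
  -- pointwise versions of operator identities
  have hAB_pt : ∀ w, adjoint A (A w) + adjoint B (B w) = w := by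
    intro w
    have h := ContinuousLinearMap.ext_iff.mp hAB w
    simpa using h
  have hR2_pt : ∀ w, R (R w) = w - adjoint A (A w) := by
    intro w
    have h := ContinuousLinearMap.ext_iff.mp hR2 w
    simpa using h
  have hpolar_pt : ∀ w, B w = V (R w) := by
    intro w
    have h := ContinuousLinearMap.ext_iff.mp hpolar w
    simpa using h
  have hVB_pt : ∀ w, adjoint V (B w) = R w := by
    intro w
    have h := ContinuousLinearMap.ext_iff.mp hVB w
    simpa using h
  have hVV_pt : ∀ z, V (adjoint V z) = z := by
    intro z
    have h := ContinuousLinearMap.ext_iff.mp hVV z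
    simpa using h
  have hRsa : adjoint R = R := hR.isSelfAdjoint
  have hBadj : ∀ z, adjoint B z = R (adjoint V z) := by
    intro z
    have h : adjoint B = R ∘L adjoint V := by
      rw [hpolar, adjoint_comp, hRsa]
    rw [h]; rfl
  have hBV : ∀ z, adjoint B (V z) = R z := by
    intro z
    have h : adjoint B ∘L V = R := by
      have := congrArg ContinuousLinearMap.adjoint hVB
      rwa [adjoint_comp, adjoint_adjoint, hRsa] at this
    exact ContinuousLinearMap.ext_iff.mp h z
  have hPR : ∀ w, adjoint V (V (R w)) = R w := by
    intro w
    rw [← hpolar_pt, hVB_pt]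
  have hRP : ∀ w, R (adjoint V (V w)) = R w := by
    intro w
    have h : R ∘L (adjoint V ∘L V) = R := by
      have h1 : (adjoint V ∘L V) ∘L R = R := by
        ext u
        simpa using hPR u
      have := congrArg ContinuousLinearMap.adjoint h1
      rwa [adjoint_comp, adjoint_comp, adjoint_adjoint, hRsa] at this
    exact ContinuousLinearMap.ext_iff.mp h w
  -- the operator S = K R K
  have Smap_add : ∀ x y, K (R (K (x + y))) = K (R (K x)) + K (R (K y)) := by
    intro x y; rw [Kadd, map_add, Kadd]
  have Smap_smul : ∀ (c : ℂ) x, K (R (K (c • x))) = c • K (R (K x)) := by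
    intro c x
    rw [Ksmul, map_smul, Ksmul, Complex.conj_conj]
  set Slin : H₁ →ₗ[ℂ] H₁ :=
    { toFun := fun x => K (R (K x))
      map_add' := Smap_add
      map_smul' := fun c x => by simpa using Smap_smul c x } with hSlin
  set S : H₁ →L[ℂ] H₁ := Slin.mkContinuous ‖R‖ (fun x => by
    show ‖K (R (K x))‖ ≤ ‖R‖ * ‖x‖
    rw [Knorm]
    calc ‖R (K x)‖ ≤ ‖R‖ * ‖K x‖ := R.le_opNorm _
      _ = ‖R‖ * ‖x‖ := by rw [Knorm]) with hSdef
  have hSapp : ∀ x, S x = K (R (K x)) := fun x => rfl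
  have RSymm := isSelfAdjoint_iff_isSymmetric.mp hR.isSelfAdjoint
  have Spos : S.IsPositive := by
    refine isPositive_def'.mpr ⟨?_, ?_⟩
    · rw [isSelfAdjoint_iff_isSymmetric]
      intro x y
      show (inner ℂ (S x) y : ℂ) = inner ℂ x (S y)
      rw [hSapp, hSapp]
      calc (inner ℂ (K (R (K x))) y : ℂ)
          = inner ℂ (K y) (R (K x)) := Ktrick' _ _
        _ = inner ℂ (R (K y)) (K x) := (RSymm (K y) (K x)).symm
        _ = inner ℂ x (K (R (K y))) := (Ktrick x (R (K y))).symm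
    · intro x
      rw [ContinuousLinearMap.reApplyInnerSelf_apply]
      have h1 : (inner ℂ (S x) x : ℂ) = inner ℂ (K x) (R (K x)) := by
        rw [hSapp]
        exact Ktrick' (R (K x)) x
      rw [h1, inner_re_symm]
      have := hR.2 (K x)
      rwa [ContinuousLinearMap.reApplyInnerSelf_apply] at this
  -- further S facts
  have hSsa : adjoint S = S := Spos.isSelfAdjoint
  have SSymm := isSelfAdjoint_iff_isSymmetric.mp Spos.isSelfAdjoint
  have hSK : ∀ w, S (K w) = K (R w) := by
    intro w; rw [hSapp, Kinv]
  have hSS : ∀ w, S (S w) = w - A (adjoint A w) := by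
    intro w
    rw [hSapp, hSapp, Kinv, hR2_pt, Ksub, Kinv, KAstar, hKA, Kinv]
  have hS2A : S ∘L (S ∘L A) = A ∘L (R ∘L R) := by
    ext u
    simp only [ContinuousLinearMap.comp_apply]
    rw [hSS, hR2_pt, map_sub]
  have hkey : S ∘L A = A ∘L R := intertwine_sqrt A R S hR Spos hS2A
  have hSA : ∀ u, S (A u) = A (R u) := by
    intro u
    have h := ContinuousLinearMap.ext_iff.mp hkey u
    simpa using h
  have hAS : ∀ u, adjoint A (S u) = R (adjoint A u) := by
    intro u
    have h := congrArg ContinuousLinearMap.adjoint hkey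
    rw [adjoint_comp, adjoint_comp, hSsa, hRsa] at h
    have h2 := ContinuousLinearMap.ext_iff.mp h u
    simpa using h2
  have hBB : ∀ w, adjoint B (B w) = w - adjoint A (A w) :=
    fun w => eq_sub_of_add_eq' (hAB_pt w)
  -- kernel lemma via density of ran B
  have hker : ∀ u, R u = 0 → V (adjoint A (K u)) = 0 := by
    intro u hu
    have hz : ∀ t, (inner ℂ (V (adjoint A (K u))) (B t) : ℂ) = 0 := by
      intro t
      rw [hpolar_pt]
      calc (inner ℂ (V (adjoint A (K u))) (V (R t)) : ℂ)
          = inner ℂ (adjoint A (K u)) (adjoint V (V (R t))) :=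
            (adjoint_inner_right V _ _).symm
        _ = inner ℂ (adjoint A (K u)) (R t) := by rw [hPR]
        _ = inner ℂ (K u) (A (R t)) := adjoint_inner_left A _ _
        _ = inner ℂ (K u) (S (A t)) := by rw [hSA]
        _ = inner ℂ (K u) (K (R (K (A t)))) := by rw [hSapp]
        _ = inner ℂ (R (K (A t))) u := Kinner _ _
        _ = inner ℂ (K (A t)) (R u) := RSymm _ _
        _ = 0 := by rw [hu, inner_zero_right]
    have hfun : (fun z : H₂ => (inner ℂ (V (adjoint A (K u))) z : ℂ)) = fun _ => 0 := by
      refine Continuous.ext_on hBdense ?_ ?_ ?_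
      · exact continuous_const.inner continuous_id
      · exact continuous_const
      · rintro z ⟨t, rfl⟩
        exact hz t
    have h0 := congrFun hfun (V (adjoint A (K u)))
    simpa [inner_self_eq_zero] using h0
  -- the projection fixes A† K V† z
  have hPfix : ∀ z : H₂, adjoint V (V (adjoint A (K (adjoint V z))))
      = adjoint A (K (adjoint V z)) := by
    intro z
    set w := adjoint A (K (adjoint V z)) with hw
    set u := w - adjoint V (V w) with hu
    have hRu : R u = 0 := by
      rw [hu, map_sub, hRP, sub_self]
    have hPu : adjoint V (V u) = 0 := by
      rw [hu, map_sub, map_sub, hVV_pt, sub_self]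
    have hiPw : (inner ℂ u (adjoint V (V w)) : ℂ) = 0 := by
      calc (inner ℂ u (adjoint V (V w)) : ℂ)
          = inner ℂ (V u) (V w) := adjoint_inner_right V _ _
        _ = inner ℂ (adjoint V (V u)) w := (adjoint_inner_left V _ _).symm
        _ = 0 := by rw [hPu, inner_zero_left]
    have hiw : (inner ℂ u w : ℂ) = 0 := by
      calc (inner ℂ u w : ℂ)
          = inner ℂ (A u) (K (adjoint V z)) := by
            rw [hw]; exact adjoint_inner_right A _ _
        _ = inner ℂ (adjoint V z) (K (A u)) := Ktrick _ _
        _ = inner ℂ (adjoint V z) (adjoint A (K u)) := by rw [hKA]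
        _ = inner ℂ z (V (adjoint A (K u))) := adjoint_inner_left V _ _
        _ = 0 := by rw [hker u hRu, inner_zero_right]
    have hself : (inner ℂ u u : ℂ) = 0 := by
      calc (inner ℂ u u : ℂ)
          = inner ℂ u w - inner ℂ u (adjoint V (V w)) := by rw [hu, inner_sub_right]
        _ = 0 := by rw [hiw, hiPw, sub_zero]
    have hu0 : u = 0 := inner_self_eq_zero.mp hself
    have : w - adjoint V (V w) = 0 := hu ▸ hu0
    have h2 := sub_eq_zero.mp this
    exact h2.symm
  -- auxiliary inner-product identities
  have hAAd : ∀ w, A (adjoint A w) = w - S (S w) := by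
    intro w; rw [hSS, sub_sub_cancel]
  have hARK : ∀ u, K (A (R (K u))) = R (adjoint A u) := by
    intro u; rw [hKA, ← hSapp, hAS]
  have hARK' : ∀ v, A (R (K v)) = K (R (adjoint A v)) := by
    intro v
    have h := congrArg K (hARK v)
    rwa [Kinv] at h
  have t15 : ∀ u v : H₁, (inner ℂ (A u) (A v) : ℂ) + inner ℂ (B u) (B v) = inner ℂ u v := by
    intro u v
    calc (inner ℂ (A u) (A v) : ℂ) + inner ℂ (B u) (B v)
        = inner ℂ u (adjoint A (A v)) + inner ℂ u (adjoint B (B v)) := by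
          rw [adjoint_inner_right, adjoint_inner_right]
      _ = inner ℂ u (adjoint A (A v) + adjoint B (B v)) := (inner_add_right _ _ _).symm
      _ = inner ℂ u v := by rw [hAB_pt]
  have hT1 : ∀ u v : H₁, (inner ℂ (A (K u)) (A (K v)) : ℂ)
      = inner ℂ v u - inner ℂ (B (K u)) (B (K v)) := by
    intro u v
    have h := t15 (K u) (K v)
    rw [Kinner] at h
    linear_combination h
  have hT4 : ∀ p q : H₂, (inner ℂ (K (adjoint B p)) (K (adjoint B q)) : ℂ)
      = inner ℂ (adjoint B q) (adjoint B p) := fun p q => Kinner _ _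
  have hT8 : ∀ p q : H₂, (inner ℂ (V (adjoint A (K (adjoint V p))))
      (V (adjoint A (K (adjoint V q)))) : ℂ)
      = inner ℂ q p - inner ℂ (adjoint B q) (adjoint B p) := by
    intro p q
    have e1 : (inner ℂ (K (adjoint V p)) (K (adjoint V q)) : ℂ) = inner ℂ q p := by
      calc (inner ℂ (K (adjoint V p)) (K (adjoint V q)) : ℂ)
          = inner ℂ (adjoint V q) (adjoint V p) := Kinner _ _
        _ = inner ℂ q (V (adjoint V p)) := adjoint_inner_left V _ _
        _ = inner ℂ q p := by rw [hVV_pt]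
    have e2 : (inner ℂ (K (adjoint V p)) (S (S (K (adjoint V q)))) : ℂ)
        = inner ℂ (adjoint B q) (adjoint B p) := by
      calc (inner ℂ (K (adjoint V p)) (S (S (K (adjoint V q)))) : ℂ)
          = inner ℂ (S (K (adjoint V p))) (S (K (adjoint V q))) :=
            (SSymm (K (adjoint V p)) (S (K (adjoint V q)))).symm
        _ = inner ℂ (K (R (adjoint V p))) (K (R (adjoint V q))) := by rw [hSK, hSK]
        _ = inner ℂ (R (adjoint V q)) (R (adjoint V p)) := Kinner _ _
        _ = inner ℂ (adjoint B q) (adjoint B p) := by rw [← hBadj, ← hBadj]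
    calc (inner ℂ (V (adjoint A (K (adjoint V p)))) (V (adjoint A (K (adjoint V q)))) : ℂ)
        = inner ℂ (adjoint A (K (adjoint V p)))
            (adjoint V (V (adjoint A (K (adjoint V q))))) :=
          (adjoint_inner_right V _ _).symm
      _ = inner ℂ (adjoint A (K (adjoint V p))) (adjoint A (K (adjoint V q))) := by
          rw [hPfix q]
      _ = inner ℂ (K (adjoint V p)) (A (adjoint A (K (adjoint V q)))) :=
          adjoint_inner_left A _ _
      _ = inner ℂ (K (adjoint V p)) (K (adjoint V q) - S (S (K (adjoint V q)))) := by
          rw [hAAd]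
      _ = inner ℂ (K (adjoint V p)) (K (adjoint V q))
            - inner ℂ (K (adjoint V p)) (S (S (K (adjoint V q)))) := inner_sub_right _ _ _
      _ = inner ℂ q p - inner ℂ (adjoint B q) (adjoint B p) := by rw [e1, e2]
  have hT2 : ∀ (u : H₁) (q : H₂), (inner ℂ (A (K u)) (K (adjoint B q)) : ℂ)
      = inner ℂ q (B (adjoint A u)) := by
    intro u q
    calc (inner ℂ (A (K u)) (K (adjoint B q)) : ℂ)
        = inner ℂ (adjoint B q) (K (A (K u))) := Ktrick _ _
      _ = inner ℂ (adjoint B q) (adjoint A u) := by rw [hKA, Kinv]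
      _ = inner ℂ q (B (adjoint A u)) := adjoint_inner_left B _ _
  have hT6 : ∀ (u : H₁) (q : H₂), (inner ℂ (B (K u)) (V (adjoint A (K (adjoint V q)))) : ℂ)
      = inner ℂ q (B (adjoint A u)) := by
    intro u q
    calc (inner ℂ (B (K u)) (V (adjoint A (K (adjoint V q)))) : ℂ)
        = inner ℂ (adjoint V (B (K u))) (adjoint A (K (adjoint V q))) :=
          (adjoint_inner_left V _ _).symm
      _ = inner ℂ (R (K u)) (adjoint A (K (adjoint V q))) := by rw [hVB_pt]
      _ = inner ℂ (A (R (K u))) (K (adjoint V q)) := adjoint_inner_right A _ _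
      _ = inner ℂ (adjoint V q) (K (A (R (K u)))) := Ktrick _ _
      _ = inner ℂ (adjoint V q) (R (adjoint A u)) := by rw [hARK]
      _ = inner ℂ q (V (R (adjoint A u))) := adjoint_inner_left V _ _
      _ = inner ℂ q (B (adjoint A u)) := by rw [← hpolar_pt]
  have hT3 : ∀ (p : H₂) (v : H₁), (inner ℂ (K (adjoint B p)) (A (K v)) : ℂ)
      = inner ℂ (B (adjoint A v)) p := by
    intro p v
    calc (inner ℂ (K (adjoint B p)) (A (K v)) : ℂ)
        = inner ℂ (K (A (K v))) (adjoint B p) := Ktrick' _ _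
      _ = inner ℂ (adjoint A v) (adjoint B p) := by rw [hKA, Kinv]
      _ = inner ℂ (B (adjoint A v)) p := adjoint_inner_right B _ _
  have hT7 : ∀ (p : H₂) (v : H₁), (inner ℂ (V (adjoint A (K (adjoint V p)))) (B (K v)) : ℂ)
      = inner ℂ (B (adjoint A v)) p := by
    intro p v
    calc (inner ℂ (V (adjoint A (K (adjoint V p)))) (B (K v)) : ℂ)
        = inner ℂ (adjoint A (K (adjoint V p))) (adjoint V (B (K v))) :=
          (adjoint_inner_right V _ _).symm
      _ = inner ℂ (adjoint A (K (adjoint V p))) (R (K v)) := by rw [hVB_pt]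
      _ = inner ℂ (K (adjoint V p)) (A (R (K v))) := adjoint_inner_left A _ _
      _ = inner ℂ (K (adjoint V p)) (K (R (adjoint A v))) := by rw [hARK']
      _ = inner ℂ (R (adjoint A v)) (adjoint V p) := Kinner _ _
      _ = inner ℂ (V (R (adjoint A v))) p := adjoint_inner_right V _ _
      _ = inner ℂ (B (adjoint A v)) p := by rw [← hpolar_pt]
  refine ⟨⟨?_, ?_, ?_, ?_⟩, ?_⟩
  · -- additivity
    intro x y
    rw [hC, hC, hC, WithLp.equiv_symm_apply, ← WithLp.toLp_add]
    apply congrArg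
    simp only [Equiv.toFun_as_coe, WithLp.ofLp_toLp, WithLp.equiv_apply, WithLp.ofLp_add, Prod.fst_add, Prod.snd_add, Kadd, map_add, Prod.mk_add_mk]
    refine Prod.ext ?_ ?_ <;> dsimp only <;> abel
  · -- conjugate homogeneity
    intro a x
    rw [hC, hC, WithLp.equiv_symm_apply, ← WithLp.toLp_smul]
    apply congrArg
    simp only [Equiv.toFun_as_coe, WithLp.ofLp_toLp, WithLp.equiv_apply, WithLp.ofLp_smul, Prod.smul_fst, Prod.smul_snd, Ksmul, map_smul,
      Prod.smul_mk, smul_add, smul_sub]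
  · -- involution
    intro x
    rw [hC x, hC]
    simp only [Equiv.apply_symm_apply]
    conv_rhs => rw [← (WithLp.equiv 2 (H₁ × H₂)).symm_apply_apply x]
    apply congrArg
    set x1 := ((WithLp.equiv 2 (H₁ × H₂)) x).1 with hx1
    set x2 := ((WithLp.equiv 2 (H₁ × H₂)) x).2 with hx2
    have d1 : K (A (K x1) + K (adjoint B x2)) = adjoint A x1 + adjoint B x2 := by
      rw [Kadd, hKA, Kinv, Kinv]
    have d2 : adjoint B (B (K x1) - V (adjoint A (K (adjoint V x2))))
        = K x1 - adjoint A (A (K x1)) - adjoint A (K (adjoint B x2)) := by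
      rw [map_sub, hBB, hBV, ← hAS, hSK, ← hBadj, sub_sub]
    have d3 : K (K x1 - adjoint A (A (K x1)) - adjoint A (K (adjoint B x2)))
        = x1 - A (adjoint A x1) - A (adjoint B x2) := by
      rw [Ksub, Ksub, Kinv, KAstar, KAstar, hKA, Kinv, Kinv]
    have d4 : adjoint V (B (K x1) - V (adjoint A (K (adjoint V x2))))
        = R (K x1) - adjoint A (K (adjoint V x2)) := by
      rw [map_sub, hVB_pt, hPfix x2]
    have d5 : K (R (K x1) - adjoint A (K (adjoint V x2)))
        = S x1 - A (adjoint V x2) := by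
      rw [Ksub, ← hSapp, KAstar, Kinv]
    have d6 : adjoint A (S x1 - A (adjoint V x2))
        = R (adjoint A x1) - adjoint A (A (adjoint V x2)) := by
      rw [map_sub, hAS]
    have d9 : B (adjoint B x2) = x2 - V (adjoint A (A (adjoint V x2))) := by
      calc B (adjoint B x2) = B (R (adjoint V x2)) := by rw [hBadj]
        _ = V (R (R (adjoint V x2))) := hpolar_pt _
        _ = V (adjoint V x2 - adjoint A (A (adjoint V x2))) := by rw [hR2_pt]
        _ = V (adjoint V x2) - V (adjoint A (A (adjoint V x2))) := map_sub _ _ _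
        _ = x2 - V (adjoint A (A (adjoint V x2))) := by rw [hVV_pt]
    refine Prod.ext ?_ ?_
    · show A (K (A (K x1) + K (adjoint B x2)))
          + K (adjoint B (B (K x1) - V (adjoint A (K (adjoint V x2))))) = x1
      rw [d1, map_add, d2, d3]
      abel
    · show B (K (A (K x1) + K (adjoint B x2)))
          - V (adjoint A (K (adjoint V (B (K x1) - V (adjoint A (K (adjoint V x2))))))) = x2
      rw [d1, map_add, d4, d5, d6, map_sub, ← hpolar_pt, d9]
      abel
  · -- inner ℂ products
    intro x y
    rw [hC x, hC y]
    simp only [WithLp.prod_inner_apply, WithLp.toLp_fst, WithLp.toLp_snd,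
      WithLp.ofLp_fst, WithLp.ofLp_snd, WithLp.equiv_apply, WithLp.equiv_symm_apply]
    simp only [inner_add_left, inner_add_right, inner_sub_left, inner_sub_right]
    rw [hT1, hT4, hT8, hT2, hT6, hT3, hT7]
    have hK15 : (inner ℂ (B (K x.fst)) (B (K y.fst)) : ℂ)
        = inner ℂ (B (K x.fst)) (B (K y.fst)) := rfl
    ring
  · -- T = C J |T|
    intro x
    rw [hT, hTabs, hJ, hC]
    simp only [Equiv.apply_symm_apply]
    apply congrArg
    refine Prod.ext ?_ ?_ <;>
      simp [Kinv, Kzero, map_zero]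
end
end

section
/- If T is a complex symmetric partial isometry with block form [[A, 0], [B, 0]] relative to H = (ker T)^⊥ ⊕ ker T, then the Aluthge transform of T equals A ⊕ 0, i.e., the block operator [[A, 0], [0, 0]]. -/
noncomputable section

open ContinuousLinearMap

def IsPartialIsometry {H : Type*} [NormedAddCommGroup H] [InnerProductSpace ℂ H]
    [CompleteSpace H] (T : H →L[ℂ] H) : Prop :=
  (adjoint T ∘L T) ∘L (adjoint T ∘L T) = adjoint T ∘L T

/-- A positive square root of an idempotent equals that idempotent. -/
lemma sqrt_of_proj {H : Type*} [NormedAddCommGroup H] [InnerProductSpace ℂ H]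
    [CompleteSpace H] (P S : H →L[ℂ] H) (hP2 : P ∘L P = P)
    (hS : S.IsPositive) (hS2 : S ∘L S = P) : S = P := by
  have hSsa : IsSelfAdjoint S := hS.isSelfAdjoint
  have hPP : ∀ x, P (P x) = P x := fun x =>
    congrFun (congrArg DFunLike.coe hP2) x
  have hSS : ∀ x, S (S x) = P x := fun x =>
    congrFun (congrArg DFunLike.coe hS2) x
  have hzero : ∀ y, S (S y) = 0 → S y = 0 := by
    intro y hy
    have h : (inner ℂ (S y) (S y) : ℂ) = 0 := by
      rw [← adjoint_inner_left S y (S y), hSsa.adjoint_eq, hy, inner_zero_left]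
    simpa [inner_self_eq_zero] using h
  ext x
  have h1 : S (x - P x) = 0 := by
    apply hzero
    rw [hSS, map_sub, hPP, sub_self]
  have h2 : S (P x) = P x := by
    set y := S (P x) - P x with hy
    have hker : S y = -y := by
      rw [hy, map_sub, hSS, hPP]
      abel
    have hpos : 0 ≤ RCLike.re (inner ℂ (S y) y : ℂ) := hS.2 y
    have hre : RCLike.re (inner ℂ (S y) y : ℂ) = -(‖y‖ ^ 2) := by
      rw [hker, inner_neg_left, map_neg, inner_self_eq_norm_sq (𝕜 := ℂ)]
    have hy0 : ‖y‖ ^ 2 ≤ 0 := by rw [hre] at hpos; linarith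
    have hyz : y = 0 := by
      have h0 : ‖y‖ ^ 2 = 0 := le_antisymm hy0 (sq_nonneg _)
      have : ‖y‖ = 0 := by nlinarith [norm_nonneg y]
      exact norm_eq_zero.mp this
    exact sub_eq_zero.mp (hy ▸ hyz)
  have hx : S x = S (P x) + S (x - P x) := by rw [← map_add]; congr 1; abel
  rw [hx, h1, h2, add_zero]

/-- For a complex symmetric partial isometry `T` with polar decomposition
`T = U|T|` (where `|T| = R` is the positive operator with `R² = T*T`, `Rh` is
its positive square root, and `U` is the unique partial isometry with
`ker U = ker T` and `T = UR`), the Aluthge transform `Rh U Rh` equals the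
block operator `A ⊕ 0 = [[A, 0], [0, 0]]` relative to `H = (ker T)ᗮ ⊕ ker T`,
where `A` is the compression of `T` to `(ker T)ᗮ`. -/
theorem aluthge_of_partialIsometry
    {H : Type*} [NormedAddCommGroup H] [InnerProductSpace ℂ H] [CompleteSpace H]
    (T : H →L[ℂ] H) (hT : IsPartialIsometry T) (hTcs : IsComplexSymmetric T)
    (R : H →L[ℂ] H) (hR : R.IsPositive) (hR2 : R ∘L R = adjoint T ∘L T)
    (Rh : H →L[ℂ] H) (hRh : Rh.IsPositive) (hRh2 : Rh ∘L Rh = R)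
    (U : H →L[ℂ] H) (hU : IsPartialIsometry U) (hUR : T = U ∘L R)
    (hker : LinearMap.ker (U : H →ₗ[ℂ] H) = LinearMap.ker (T : H →ₗ[ℂ] H))
    (A : (LinearMap.ker (T : H →ₗ[ℂ] H))ᗮ →L[ℂ] (LinearMap.ker (T : H →ₗ[ℂ] H))ᗮ)
    (hA : A = Submodule.orthogonalProjectionOnto (LinearMap.ker (T : H →ₗ[ℂ] H))ᗮ ∘L T ∘L (LinearMap.ker (T : H →ₗ[ℂ] H))ᗮ.subtypeL) :
    Rh ∘L U ∘L Rh =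
      (LinearMap.ker (T : H →ₗ[ℂ] H))ᗮ.subtypeL ∘L A ∘L Submodule.orthogonalProjectionOnto (LinearMap.ker (T : H →ₗ[ℂ] H))ᗮ := by
  set P := adjoint T ∘L T with hP
  have hRP : R = P := sqrt_of_proj P R hT hR hR2
  have hRhP : Rh = P := sqrt_of_proj P Rh hT hRh (hRh2.trans hRP)
  have hPP : ∀ x, P (P x) = P x := fun x => congrFun (congrArg DFunLike.coe hT) x
  haveI : CompleteSpace (LinearMap.ker (T : H →ₗ[ℂ] H)) := (isClosed_ker T).completeSpace_coe
  have hProj : ∀ x : H, ((Submodule.orthogonalProjectionOnto (LinearMap.ker (T : H →ₗ[ℂ] H))ᗮ x : H)) = P x := by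
    intro x
    rw [← Submodule.starProjection_apply]
    apply Submodule.eq_starProjection_of_mem_orthogonal
    · rw [Submodule.mem_orthogonal]
      intro u hu
      have hu0 : T u = 0 := hu
      rw [hP, comp_apply, adjoint_inner_right, hu0, inner_zero_left]
    · rw [Submodule.orthogonal_orthogonal]
      show T (x - P x) = 0
      have h : (inner ℂ (T (x - P x)) (T (x - P x)) : ℂ) = 0 := by
        rw [← adjoint_inner_left T (x - P x) (T (x - P x))]
        have : adjoint T (T (x - P x)) = 0 := by
          show P (x - P x) = 0
          rw [map_sub, hPP, sub_self]
        rw [this, inner_zero_left]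
      simpa [inner_self_eq_zero] using h
  ext x
  simp only [comp_apply, hA, Submodule.subtypeL_apply, Submodule.coe_subtypeL']
  rw [hProj, hProj, hRhP]
  have hTx : ∀ z, T z = U (P z) := by
    intro z
    rw [hUR, comp_apply, hRP]
  rw [hTx, hPP]
end
end
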